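/- arXiv:1301.4518 — 3 statements merged into one kernel-verified Lean document; each statement's English description precedes it below -/
import Mathlib

section
/- (Slide lemma) In the Motzkin monoid M_n, if T is any product of generators from {t_{i+1}, t_{i+2}, ..., t_{k−1}}, then (l_{k−1} l_{k−2} ··· l_i) T = T' (l_{k−1} l_{k−2} ··· l_i) for some product T' of generators from {t_i, t_{i+1}, ..., t_{k−2}}; in fact each t_j in T can be replaced by t_{j−1}. -/
/-- Vertices of a Motzkin diagram: `Sum.inl` is the top row, `Sum.inr` the bottom row. -/
abbrev MVert (n : ℕ) := Fin n ⊕ Fin n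

/-- A Motzkin-type diagram on two rows of `n` vertices, given by its edge relation. -/
abbrev MDiag (n : ℕ) := MVert n → MVert n → Prop

/-- One step between middle-row vertices when stacking `d₁` on top of `d₂`. -/
def dstep {n : ℕ} (d₁ d₂ : MDiag n) (m m' : Fin n) : Prop :=
  d₁ (Sum.inr m) (Sum.inr m') ∨ d₂ (Sum.inl m) (Sum.inl m')

/-- Reachability through the middle row when stacking `d₁` on top of `d₂`. -/
def dreach {n : ℕ} (d₁ d₂ : MDiag n) : Fin n → Fin n → Prop :=
  Relation.ReflTransGen (dstep d₁ d₂)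

/-- Diagram multiplication: stack `d₁` on top of `d₂`, identify the bottom row of `d₁`
with the top row of `d₂`, keep the induced edges, and discard closed loops (x = 1). -/
def dcomp {n : ℕ} (d₁ d₂ : MDiag n) : MDiag n := fun x y =>
  match x, y with
  | Sum.inl u, Sum.inl u' =>
      d₁ (Sum.inl u) (Sum.inl u') ∨
        (u ≠ u' ∧ ∃ m m', d₁ (Sum.inl u) (Sum.inr m) ∧ dreach d₁ d₂ m m' ∧
          d₁ (Sum.inl u') (Sum.inr m'))
  | Sum.inl u, Sum.inr v =>
      ∃ m m', d₁ (Sum.inl u) (Sum.inr m) ∧ dreach d₁ d₂ m m' ∧ d₂ (Sum.inl m') (Sum.inr v)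
  | Sum.inr v, Sum.inl u =>
      ∃ m m', d₁ (Sum.inl u) (Sum.inr m) ∧ dreach d₁ d₂ m m' ∧ d₂ (Sum.inl m') (Sum.inr v)
  | Sum.inr v, Sum.inr v' =>
      d₂ (Sum.inr v) (Sum.inr v') ∨
        (v ≠ v' ∧ ∃ m m', d₂ (Sum.inl m) (Sum.inr v) ∧ dreach d₁ d₂ m m' ∧
          d₂ (Sum.inl m') (Sum.inr v'))

/-- The identity diagram. -/
def iddiag (n : ℕ) : MDiag n := fun x y =>
  match x, y with
  | Sum.inl a, Sum.inr b => a = b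
  | Sum.inr a, Sum.inl b => a = b
  | _, _ => False

/-- The Temperley-Lieb generator `t i` (0-indexed): horizontal edges joining vertices
`i, i+1` on top and on bottom, vertical edges elsewhere. -/
def tdiag (n i : ℕ) : MDiag n := fun x y =>
  match x, y with
  | Sum.inl a, Sum.inl b => ((a : ℕ) = i ∧ (b : ℕ) = i + 1) ∨ ((a : ℕ) = i + 1 ∧ (b : ℕ) = i)
  | Sum.inr a, Sum.inr b => ((a : ℕ) = i ∧ (b : ℕ) = i + 1) ∨ ((a : ℕ) = i + 1 ∧ (b : ℕ) = i)
  | Sum.inl a, Sum.inr b => a = b ∧ (a : ℕ) ≠ i ∧ (a : ℕ) ≠ i + 1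
  | Sum.inr a, Sum.inl b => a = b ∧ (a : ℕ) ≠ i ∧ (a : ℕ) ≠ i + 1

/-- The generator `r i` (0-indexed): an edge from top vertex `i+1` to bottom vertex `i`,
vertical edges elsewhere; top vertex `i` and bottom vertex `i+1` are empty. -/
def rdiag (n i : ℕ) : MDiag n := fun x y =>
  match x, y with
  | Sum.inl a, Sum.inr b =>
      ((a : ℕ) = i + 1 ∧ (b : ℕ) = i) ∨ (a = b ∧ (a : ℕ) ≠ i ∧ (a : ℕ) ≠ i + 1)
  | Sum.inr b, Sum.inl a =>
      ((a : ℕ) = i + 1 ∧ (b : ℕ) = i) ∨ (a = b ∧ (a : ℕ) ≠ i ∧ (a : ℕ) ≠ i + 1)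
  | _, _ => False

/-- The generator `l i` (0-indexed): an edge from top vertex `i` to bottom vertex `i+1`,
vertical edges elsewhere; top vertex `i+1` and bottom vertex `i` are empty. -/
def ldiag (n i : ℕ) : MDiag n := fun x y =>
  match x, y with
  | Sum.inl a, Sum.inr b =>
      ((a : ℕ) = i ∧ (b : ℕ) = i + 1) ∨ (a = b ∧ (a : ℕ) ≠ i ∧ (a : ℕ) ≠ i + 1)
  | Sum.inr b, Sum.inl a =>
      ((a : ℕ) = i ∧ (b : ℕ) = i + 1) ∨ (a = b ∧ (a : ℕ) ≠ i ∧ (a : ℕ) ≠ i + 1)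
  | _, _ => False

/-- The idempotent `p i = r i * l i` (0-indexed): the partial-identity diagram whose
vertex `i` on top and on bottom is empty, with vertical edges elsewhere. -/
def pdiag (n i : ℕ) : MDiag n := fun x y =>
  match x, y with
  | Sum.inl a, Sum.inr b => a = b ∧ (a : ℕ) ≠ i
  | Sum.inr a, Sum.inl b => a = b ∧ (a : ℕ) ≠ i
  | _, _ => False

/-- The product of a list of diagrams, multiplied left-to-right. -/
def dprod (n : ℕ) (L : List (MDiag n)) : MDiag n := L.foldr dcomp (iddiag n)

open Sum Relation


section Aux
variable {α : Type*}

lemma rtg_bot {a b : α} (h : ReflTransGen (fun _ _ => False) a b) : a = b := by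
  induction h with
  | refl => rfl
  | tail _ h2 _ => exact h2.elim

lemma rtg_matching {r : α → α → Prop} (hsym : ∀ a b, r a b → r b a)
    (hfn : ∀ a b c, r a b → r a c → b = c) {a b : α}
    (h : ReflTransGen r a b) : a = b ∨ r a b := by
  induction h with
  | refl => exact Or.inl rfl
  | tail _ h2 ih =>
    rcases ih with rfl | h3
    · exact Or.inr h2
    · exact Or.inl (hfn _ _ _ (hsym _ _ h3) h2)

/-- closure of a matching `M` together with one extra edge `p - q`. -/
def Rcl (M : α → α → Prop) (p q u v : α) : Prop :=
  u = v ∨ M u v ∨ (u = p ∧ v = q) ∨ (u = q ∧ v = p) ∨ (M u p ∧ v = q) ∨ (M u q ∧ v = p) ∨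
    (u = p ∧ M q v) ∨ (u = q ∧ M p v) ∨ (M u p ∧ M q v) ∨ (M u q ∧ M p v)

lemma rcl_step {M : α → α → Prop} {p q : α} (hpq : p ≠ q)
    (hsym : ∀ a b, M a b → M b a) (hfn : ∀ a b c, M a b → M a c → b = c)
    (hirr : ∀ a, ¬ M a a) {u b c : α}
    (ih : Rcl M p q u b)
    (h2 : ((b = p ∧ c = q) ∨ (b = q ∧ c = p)) ∨ M b c) :
    Rcl M p q u c := by
  unfold Rcl at *
  rcases h2 with (⟨rfl, rfl⟩ | ⟨rfl, rfl⟩) | hM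
  · rcases ih with rfl | h | ⟨rfl, h⟩ | ⟨rfl, h⟩ | ⟨h, h'⟩ | ⟨h, h'⟩ | ⟨rfl, h⟩ | ⟨rfl, h⟩ | ⟨h1, h2⟩ | ⟨h1, h2⟩
    · exact Or.inr (Or.inr (Or.inl ⟨rfl, rfl⟩))
    · exact Or.inr (Or.inr (Or.inr (Or.inr (Or.inl ⟨h, rfl⟩))))
    · exact absurd h hpq
    · exact Or.inl rfl
    · exact absurd h' hpq
    · exact Or.inr (Or.inl h)
    · exact Or.inr (Or.inr (Or.inl ⟨rfl, rfl⟩))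
    · exact absurd h (hirr _)
    · exact Or.inl (hfn _ _ _ (hsym _ _ h1) (hsym _ _ h2))
    · exact absurd h2 (hirr _)
  · rcases ih with rfl | h | ⟨rfl, h⟩ | ⟨rfl, h⟩ | ⟨h, h'⟩ | ⟨h, h'⟩ | ⟨rfl, h⟩ | ⟨rfl, h⟩ | ⟨h1, h2⟩ | ⟨h1, h2⟩
    · exact Or.inr (Or.inr (Or.inr (Or.inl ⟨rfl, rfl⟩)))
    · exact Or.inr (Or.inr (Or.inr (Or.inr (Or.inr (Or.inl ⟨h, rfl⟩)))))
    · exact Or.inl rfl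
    · exact absurd h.symm hpq
    · exact Or.inr (Or.inl h)
    · exact absurd h'.symm hpq
    · exact absurd h (hirr _)
    · exact Or.inr (Or.inr (Or.inr (Or.inl ⟨rfl, rfl⟩)))
    · exact absurd h2 (hirr _)
    · exact Or.inl (hfn _ _ _ (hsym _ _ h1) (hsym _ _ h2))
  · rcases ih with rfl | h | ⟨rfl, rfl⟩ | ⟨rfl, rfl⟩ | ⟨h, rfl⟩ | ⟨h, rfl⟩ | ⟨rfl, h⟩ | ⟨rfl, h⟩ | ⟨h1, h2⟩ | ⟨h1, h2⟩
    · exact Or.inr (Or.inl hM)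
    · exact Or.inl (hfn _ _ _ (hsym _ _ h) hM)
    · exact Or.inr (Or.inr (Or.inr (Or.inr (Or.inr (Or.inr (Or.inl ⟨rfl, hM⟩))))))
    · exact Or.inr (Or.inr (Or.inr (Or.inr (Or.inr (Or.inr (Or.inr (Or.inl ⟨rfl, hM⟩)))))))
    · exact Or.inr (Or.inr (Or.inr (Or.inr (Or.inr (Or.inr (Or.inr (Or.inr (Or.inl ⟨h, hM⟩))))))))
    · exact Or.inr (Or.inr (Or.inr (Or.inr (Or.inr (Or.inr (Or.inr (Or.inr (Or.inr ⟨h, hM⟩))))))))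
    · have : q = c := hfn _ _ _ (hsym _ _ h) hM
      exact Or.inr (Or.inr (Or.inl ⟨rfl, this.symm ▸ rfl⟩))
    · have : p = c := hfn _ _ _ (hsym _ _ h) hM
      exact Or.inr (Or.inr (Or.inr (Or.inl ⟨rfl, this.symm ▸ rfl⟩)))
    · have : c = q := (hfn _ _ _ (hsym _ _ h2) hM).symm
      exact Or.inr (Or.inr (Or.inr (Or.inr (Or.inl ⟨h1, this⟩))))
    · have : c = p := (hfn _ _ _ (hsym _ _ h2) hM).symm
      exact Or.inr (Or.inr (Or.inr (Or.inr (Or.inr (Or.inl ⟨h1, this⟩)))))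

lemma rcl_iff {M : α → α → Prop} {p q : α} (hpq : p ≠ q)
    (hsym : ∀ a b, M a b → M b a) (hfn : ∀ a b c, M a b → M a c → b = c)
    (hirr : ∀ a, ¬ M a a) (u v : α) :
    ReflTransGen (fun a b => ((a = p ∧ b = q) ∨ (a = q ∧ b = p)) ∨ M a b) u v ↔
      Rcl M p q u v := by
  constructor
  · intro h
    induction h with
    | refl => exact Or.inl rfl
    | tail _ h2 ih => exact rcl_step hpq hsym hfn hirr ih h2
  · intro h
    rcases h with rfl | h | ⟨rfl, rfl⟩ | ⟨rfl, rfl⟩ | ⟨h, rfl⟩ | ⟨h, rfl⟩ | ⟨rfl, h⟩ | ⟨rfl, h⟩ | ⟨h1, h2⟩ | ⟨h1, h2⟩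
    · exact ReflTransGen.refl
    · exact ReflTransGen.single (Or.inr h)
    · exact ReflTransGen.single (Or.inl (Or.inl ⟨rfl, rfl⟩))
    · exact ReflTransGen.single (Or.inl (Or.inr ⟨rfl, rfl⟩))
    · exact ReflTransGen.head (Or.inr h) (ReflTransGen.single (Or.inl (Or.inl ⟨rfl, rfl⟩)))
    · exact ReflTransGen.head (Or.inr h) (ReflTransGen.single (Or.inl (Or.inr ⟨rfl, rfl⟩)))
    · exact ReflTransGen.head (Or.inl (Or.inl ⟨rfl, rfl⟩)) (ReflTransGen.single (Or.inr h))
    · exact ReflTransGen.head (Or.inl (Or.inr ⟨rfl, rfl⟩)) (ReflTransGen.single (Or.inr h))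
    · exact ReflTransGen.head (Or.inr h1) (ReflTransGen.head (Or.inl (Or.inl ⟨rfl, rfl⟩))
        (ReflTransGen.single (Or.inr h2)))
    · exact ReflTransGen.head (Or.inr h1) (ReflTransGen.head (Or.inl (Or.inr ⟨rfl, rfl⟩))
        (ReflTransGen.single (Or.inr h2)))





/-- Closed form for `dcomp (tdiag n j) T` when `T` is a partial matching. -/
def TS (n j : ℕ) (T : MDiag n) : MDiag n := fun x y =>
  match x, y with
  | inl u, inl u' =>
      ((u:ℕ) = j ∧ (u':ℕ) = j+1) ∨ ((u:ℕ) = j+1 ∧ (u':ℕ) = j) ∨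
      (u ≠ u' ∧ (u:ℕ) ≠ j ∧ (u:ℕ) ≠ j+1 ∧ (u':ℕ) ≠ j ∧ (u':ℕ) ≠ j+1 ∧
        (T (inl u) (inl u') ∨
          (∃ a b : Fin n, (a:ℕ) = j ∧ (b:ℕ) = j+1 ∧ T (inl u) (inl a) ∧ T (inl b) (inl u')) ∨
          (∃ a b : Fin n, (a:ℕ) = j+1 ∧ (b:ℕ) = j ∧ T (inl u) (inl a) ∧ T (inl b) (inl u'))))
  | inl u, inr v =>
      (u:ℕ) ≠ j ∧ (u:ℕ) ≠ j+1 ∧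
        (T (inl u) (inr v) ∨
          (∃ a b : Fin n, (a:ℕ) = j ∧ (b:ℕ) = j+1 ∧ T (inl u) (inl a) ∧ T (inl b) (inr v)) ∨
          (∃ a b : Fin n, (a:ℕ) = j+1 ∧ (b:ℕ) = j ∧ T (inl u) (inl a) ∧ T (inl b) (inr v)))
  | inr v, inl u =>
      (u:ℕ) ≠ j ∧ (u:ℕ) ≠ j+1 ∧
        (T (inl u) (inr v) ∨
          (∃ a b : Fin n, (a:ℕ) = j ∧ (b:ℕ) = j+1 ∧ T (inl u) (inl a) ∧ T (inl b) (inr v)) ∨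
          (∃ a b : Fin n, (a:ℕ) = j+1 ∧ (b:ℕ) = j ∧ T (inl u) (inl a) ∧ T (inl b) (inr v)))
  | inr v, inr v' =>
      T (inr v) (inr v') ∨ (v ≠ v' ∧
        ((∃ a b : Fin n, (a:ℕ) = j ∧ (b:ℕ) = j+1 ∧ T (inl a) (inr v) ∧ T (inl b) (inr v')) ∨
         (∃ a b : Fin n, (a:ℕ) = j+1 ∧ (b:ℕ) = j ∧ T (inl a) (inr v) ∧ T (inl b) (inr v'))))


set_option maxHeartbeats 1000000 in
lemma dcomp_tdiag {n j : ℕ} (hj : j + 1 < n) (T : MDiag n)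
    (hsym : ∀ x y, T x y → T y x) (hfn : ∀ x y z, T x y → T x z → y = z)
    (hirt : ∀ a : Fin n, ¬ T (inl a) (inl a)) :
    dcomp (tdiag n j) T = TS n j T := by
  have hjn : j < n := by omega
  set p : Fin n := ⟨j, hjn⟩ with hp
  set q : Fin n := ⟨j + 1, hj⟩ with hq
  have hpq : p ≠ q := by
    intro h
    have := congrArg Fin.val h
    simp [hp, hq] at this
  have hMsym : ∀ a b : Fin n, T (inl a) (inl b) → T (inl b) (inl a) := fun a b h => hsym _ _ h
  have hMfn : ∀ a b c : Fin n, T (inl a) (inl b) → T (inl a) (inl c) → b = c :=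
    fun a b c h1 h2 => Sum.inl.inj (hfn _ _ _ h1 h2)
  have hTB : ∀ (a b c : Fin n), T (inl a) (inl b) → T (inl a) (inr c) → False :=
    fun a b c h1 h2 => Sum.inl_ne_inr (hfn _ _ _ h1 h2)
  have hDD : ∀ (a b c : Fin n), T (inl a) (inr b) → T (inl a) (inr c) → b = c :=
    fun a b c h1 h2 => Sum.inr.inj (hfn _ _ _ h1 h2)
  have hre : ∀ a b : Fin n, dreach (tdiag n j) T a b ↔
      Rcl (fun a b : Fin n => T (inl a) (inl b)) p q a b := by
    intro a b
    have hds : dstep (tdiag n j) T = fun a b : Fin n =>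
        (((a = p ∧ b = q) ∨ (a = q ∧ b = p)) ∨ T (inl a) (inl b)) := by
      funext a b
      apply propext
      show (((a:ℕ) = j ∧ (b:ℕ) = j+1) ∨ ((a:ℕ) = j+1 ∧ (b:ℕ) = j)) ∨ T (inl a) (inl b) ↔ _
      constructor
      · rintro ((⟨h1, h2⟩ | ⟨h1, h2⟩) | h)
        · exact Or.inl (Or.inl ⟨Fin.ext h1, Fin.ext h2⟩)
        · exact Or.inl (Or.inr ⟨Fin.ext h1, Fin.ext h2⟩)
        · exact Or.inr h
      · rintro ((⟨rfl, rfl⟩ | ⟨rfl, rfl⟩) | h)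
        · exact Or.inl (Or.inl ⟨rfl, rfl⟩)
        · exact Or.inl (Or.inr ⟨rfl, rfl⟩)
        · exact Or.inr h
    unfold dreach
    rw [hds]
    exact rcl_iff hpq hMsym hMfn hirt a b
  have key : ∀ u v : Fin n,
      (∃ m m', (u = m ∧ (u:ℕ) ≠ j ∧ (u:ℕ) ≠ j + 1) ∧ dreach (tdiag n j) T m m' ∧
        T (inl m') (inr v)) ↔
      ((u:ℕ) ≠ j ∧ (u:ℕ) ≠ j + 1 ∧
        (T (inl u) (inr v) ∨
          (∃ a b : Fin n, (a:ℕ) = j ∧ (b:ℕ) = j+1 ∧ T (inl u) (inl a) ∧ T (inl b) (inr v)) ∨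
          (∃ a b : Fin n, (a:ℕ) = j+1 ∧ (b:ℕ) = j ∧ T (inl u) (inl a) ∧ T (inl b) (inr v)))) := by
    intro u v
    constructor
    · rintro ⟨m, m', ⟨rfl, hu1, hu2⟩, h2, h3⟩
      have hr := (hre _ _).1 h2
      unfold Rcl at hr
      rcases hr with rfl | hM | ⟨h4, h5⟩ | ⟨h4, h5⟩ | ⟨hM, rfl⟩ | ⟨hM, rfl⟩ | ⟨h4, hM⟩ |
        ⟨h4, hM⟩ | ⟨hM1, hM2⟩ | ⟨hM1, hM2⟩
      · exact ⟨hu1, hu2, Or.inl h3⟩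
      · exact absurd h3 (fun h3 => hTB _ _ _ (hMsym _ _ hM) h3)
      · exact absurd (congrArg Fin.val h4) hu1
      · exact absurd (congrArg Fin.val h4) hu2
      · exact ⟨hu1, hu2, Or.inr (Or.inl ⟨p, q, rfl, rfl, hM, h3⟩)⟩
      · exact ⟨hu1, hu2, Or.inr (Or.inr ⟨q, p, rfl, rfl, hM, h3⟩)⟩
      · exact absurd (congrArg Fin.val h4) hu1
      · exact absurd (congrArg Fin.val h4) hu2
      · exact absurd h3 (fun h3 => hTB _ _ _ (hMsym _ _ hM2) h3)
      · exact absurd h3 (fun h3 => hTB _ _ _ (hMsym _ _ hM2) h3)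
    · rintro ⟨hu1, hu2, h | ⟨a, b, ha, hb, h1, h2⟩ | ⟨a, b, ha, hb, h1, h2⟩⟩
      · exact ⟨u, u, ⟨rfl, hu1, hu2⟩, ReflTransGen.refl, h⟩
      · have hap : a = p := Fin.ext ha
        have hbq : b = q := Fin.ext hb
        subst hap; subst hbq
        exact ⟨u, q, ⟨rfl, hu1, hu2⟩, (hre _ _).2 (Or.inr (Or.inr (Or.inr (Or.inr
          (Or.inl ⟨h1, rfl⟩))))), h2⟩
      · have hap : a = q := Fin.ext ha
        have hbq : b = p := Fin.ext hb
        subst hap; subst hbq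
        exact ⟨u, p, ⟨rfl, hu1, hu2⟩, (hre _ _).2 (Or.inr (Or.inr (Or.inr (Or.inr
          (Or.inr (Or.inl ⟨h1, rfl⟩)))))), h2⟩
  funext x y
  apply propext
  rcases x with u | v <;> rcases y with u' | v'
  · show (((((u:ℕ) = j ∧ (u':ℕ) = j+1) ∨ ((u:ℕ) = j+1 ∧ (u':ℕ) = j))) ∨
        (u ≠ u' ∧ ∃ m m', (u = m ∧ (u:ℕ) ≠ j ∧ (u:ℕ) ≠ j + 1) ∧
          dreach (tdiag n j) T m m' ∧ (u' = m' ∧ (u':ℕ) ≠ j ∧ (u':ℕ) ≠ j + 1))) ↔ _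
    constructor
    · rintro (h | ⟨hne, m, m', ⟨rfl, hu1, hu2⟩, h2, rfl, hv1, hv2⟩)
      · rcases h with ⟨h1, h2⟩ | ⟨h1, h2⟩
        · exact Or.inl ⟨h1, h2⟩
        · exact Or.inr (Or.inl ⟨h1, h2⟩)
      · have hr := (hre _ _).1 h2
        unfold Rcl at hr
        rcases hr with rfl | hM | ⟨h4, h5⟩ | ⟨h4, h5⟩ | ⟨hM, h5⟩ | ⟨hM, h5⟩ | ⟨h4, hM⟩ |
          ⟨h4, hM⟩ | ⟨hM1, hM2⟩ | ⟨hM1, hM2⟩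
        · exact absurd rfl hne
        · exact Or.inr (Or.inr ⟨hne, hu1, hu2, hv1, hv2, Or.inl hM⟩)
        · exact absurd (congrArg Fin.val h4) hu1
        · exact absurd (congrArg Fin.val h4) hu2
        · exact absurd (congrArg Fin.val h5) hv2
        · exact absurd (congrArg Fin.val h5) hv1
        · exact absurd (congrArg Fin.val h4) hu1
        · exact absurd (congrArg Fin.val h4) hu2
        · exact Or.inr (Or.inr ⟨hne, hu1, hu2, hv1, hv2, Or.inr (Or.inl ⟨p, q, rfl, rfl, hM1, hM2⟩)⟩)
        · exact Or.inr (Or.inr ⟨hne, hu1, hu2, hv1, hv2, Or.inr (Or.inr ⟨q, p, rfl, rfl, hM1, hM2⟩)⟩)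
    · rintro (⟨h1, h2⟩ | ⟨h1, h2⟩ | ⟨hne, hu1, hu2, hv1, hv2, h⟩)
      · exact Or.inl (Or.inl ⟨h1, h2⟩)
      · exact Or.inl (Or.inr ⟨h1, h2⟩)
      · refine Or.inr ⟨hne, u, u', ⟨rfl, hu1, hu2⟩, (hre _ _).2 ?_, rfl, hv1, hv2⟩
        unfold Rcl
        rcases h with hM | ⟨a, b, ha, hb, h1, h2⟩ | ⟨a, b, ha, hb, h1, h2⟩
        · exact Or.inr (Or.inl hM)
        · have hap : a = p := Fin.ext ha
          have hbq : b = q := Fin.ext hb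
          subst hap; subst hbq
          exact Or.inr (Or.inr (Or.inr (Or.inr (Or.inr (Or.inr (Or.inr (Or.inr
            (Or.inl ⟨h1, h2⟩))))))))
        · have hap : a = q := Fin.ext ha
          have hbq : b = p := Fin.ext hb
          subst hap; subst hbq
          exact Or.inr (Or.inr (Or.inr (Or.inr (Or.inr (Or.inr (Or.inr (Or.inr
            (Or.inr ⟨h1, h2⟩))))))))
  · exact key u v'
  · exact key u' v
  · show (T (inr v) (inr v') ∨ (v ≠ v' ∧ ∃ m m', T (inl m) (inr v) ∧
        dreach (tdiag n j) T m m' ∧ T (inl m') (inr v'))) ↔ _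
    constructor
    · rintro (h | ⟨hne, m, m', h1, h2, h3⟩)
      · exact Or.inl h
      · have hr := (hre _ _).1 h2
        unfold Rcl at hr
        rcases hr with rfl | hM | ⟨rfl, rfl⟩ | ⟨rfl, rfl⟩ | ⟨hM, h5⟩ | ⟨hM, h5⟩ | ⟨h4, hM⟩ |
          ⟨h4, hM⟩ | ⟨hM1, hM2⟩ | ⟨hM1, hM2⟩
        · exact absurd (hDD _ _ _ h1 h3) hne
        · exact absurd h1 (fun h1 => hTB _ _ _ hM h1)
        · exact Or.inr ⟨hne, Or.inl ⟨p, q, rfl, rfl, h1, h3⟩⟩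
        · exact Or.inr ⟨hne, Or.inr ⟨q, p, rfl, rfl, h1, h3⟩⟩
        · exact absurd h1 (fun h1 => hTB _ _ _ hM h1)
        · exact absurd h1 (fun h1 => hTB _ _ _ hM h1)
        · exact absurd h3 (fun h3 => hTB _ _ _ (hMsym _ _ hM) h3)
        · exact absurd h3 (fun h3 => hTB _ _ _ (hMsym _ _ hM) h3)
        · exact absurd h1 (fun h1 => hTB _ _ _ hM1 h1)
        · exact absurd h1 (fun h1 => hTB _ _ _ hM1 h1)
    · rintro (h | ⟨hne, ⟨a, b, ha, hb, h1, h2⟩ | ⟨a, b, ha, hb, h1, h2⟩⟩)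
      · exact Or.inl h
      · have hap : a = p := Fin.ext ha
        have hbq : b = q := Fin.ext hb
        subst hap; subst hbq
        exact Or.inr ⟨hne, p, q, h1, (hre _ _).2 (Or.inr (Or.inr (Or.inl ⟨rfl, rfl⟩))), h2⟩
      · have hap : a = q := Fin.ext ha
        have hbq : b = p := Fin.ext hb
        subst hap; subst hbq
        exact Or.inr ⟨hne, q, p, h1, (hre _ _).2 (Or.inr (Or.inr (Or.inr (Or.inl ⟨rfl, rfl⟩)))), h2⟩

lemma TS_sym {n j : ℕ} {T : MDiag n} (hsym : ∀ x y, T x y → T y x) :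
    ∀ x y, TS n j T x y → TS n j T y x := by
  rintro (u | v) (u' | v')
  · rintro (⟨h1, h2⟩ | ⟨h1, h2⟩ | ⟨hne, ha1, ha2, hb1, hb2, h | ⟨a, b, ha, hb, h1, h2⟩ |
      ⟨a, b, ha, hb, h1, h2⟩⟩)
    · exact Or.inr (Or.inl ⟨h2, h1⟩)
    · exact Or.inl ⟨h2, h1⟩
    · exact Or.inr (Or.inr ⟨hne.symm, hb1, hb2, ha1, ha2, Or.inl (hsym _ _ h)⟩)
    · exact Or.inr (Or.inr ⟨hne.symm, hb1, hb2, ha1, ha2,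
        Or.inr (Or.inr ⟨b, a, hb, ha, hsym _ _ h2, hsym _ _ h1⟩)⟩)
    · exact Or.inr (Or.inr ⟨hne.symm, hb1, hb2, ha1, ha2,
        Or.inr (Or.inl ⟨b, a, hb, ha, hsym _ _ h2, hsym _ _ h1⟩)⟩)
  · exact fun h => h
  · exact fun h => h
  · rintro (h | ⟨hne, ⟨a, b, ha, hb, h1, h2⟩ | ⟨a, b, ha, hb, h1, h2⟩⟩)
    · exact Or.inl (hsym _ _ h)
    · exact Or.inr ⟨hne.symm, Or.inr ⟨b, a, hb, ha, h2, h1⟩⟩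
    · exact Or.inr ⟨hne.symm, Or.inl ⟨b, a, hb, ha, h2, h1⟩⟩

lemma TS_irt {n j : ℕ} {T : MDiag n} : ∀ a : Fin n, ¬ TS n j T (inl a) (inl a) := by
  rintro a (⟨h1, h2⟩ | ⟨h1, h2⟩ | ⟨hne, _⟩)
  · omega
  · omega
  · exact hne rfl

lemma TS_irb {n j : ℕ} {T : MDiag n} (hirb : ∀ a : Fin n, ¬ T (inr a) (inr a)) :
    ∀ a : Fin n, ¬ TS n j T (inr a) (inr a) := by
  rintro a (h | ⟨hne, _⟩)
  · exact hirb a h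
  · exact hne rfl

lemma TS_suppTT {n j lo hi : ℕ} (hlo : lo ≤ j) (hhi : j + 1 ≤ hi) {T : MDiag n}
    (hTT : ∀ a b : Fin n, T (inl a) (inl b) →
      (lo ≤ (a:ℕ) ∧ (a:ℕ) ≤ hi) ∧ (lo ≤ (b:ℕ) ∧ (b:ℕ) ≤ hi)) :
    ∀ a b : Fin n, TS n j T (inl a) (inl b) →
      (lo ≤ (a:ℕ) ∧ (a:ℕ) ≤ hi) ∧ (lo ≤ (b:ℕ) ∧ (b:ℕ) ≤ hi) := by
  rintro a b (⟨h1, h2⟩ | ⟨h1, h2⟩ | ⟨_, _, _, _, _, h | ⟨c, d, hc, hd, h1, h2⟩ |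
    ⟨c, d, hc, hd, h1, h2⟩⟩)
  · omega
  · omega
  · exact hTT _ _ h
  · exact ⟨(hTT _ _ h1).1, (hTT _ _ h2).2⟩
  · exact ⟨(hTT _ _ h1).1, (hTT _ _ h2).2⟩

lemma TS_suppBB {n j lo hi : ℕ} (hlo : lo ≤ j) (hhi : j + 1 ≤ hi) {T : MDiag n}
    (hBB : ∀ a b : Fin n, T (inr a) (inr b) →
      (lo ≤ (a:ℕ) ∧ (a:ℕ) ≤ hi) ∧ (lo ≤ (b:ℕ) ∧ (b:ℕ) ≤ hi))
    (hV : ∀ a b : Fin n, T (inl a) (inr b) →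
      ((lo ≤ (a:ℕ) ∧ (a:ℕ) ≤ hi) ↔ (lo ≤ (b:ℕ) ∧ (b:ℕ) ≤ hi))) :
    ∀ a b : Fin n, TS n j T (inr a) (inr b) →
      (lo ≤ (a:ℕ) ∧ (a:ℕ) ≤ hi) ∧ (lo ≤ (b:ℕ) ∧ (b:ℕ) ≤ hi) := by
  rintro a b (h | ⟨_, ⟨c, d, hc, hd, h1, h2⟩ | ⟨c, d, hc, hd, h1, h2⟩⟩)
  · exact hBB _ _ h
  · exact ⟨(hV _ _ h1).1 (by omega), (hV _ _ h2).1 (by omega)⟩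
  · exact ⟨(hV _ _ h1).1 (by omega), (hV _ _ h2).1 (by omega)⟩

lemma TS_suppV {n j lo hi : ℕ} (hlo : lo ≤ j) (hhi : j + 1 ≤ hi) {T : MDiag n}
    (hTT : ∀ a b : Fin n, T (inl a) (inl b) →
      (lo ≤ (a:ℕ) ∧ (a:ℕ) ≤ hi) ∧ (lo ≤ (b:ℕ) ∧ (b:ℕ) ≤ hi))
    (hV : ∀ a b : Fin n, T (inl a) (inr b) →
      ((lo ≤ (a:ℕ) ∧ (a:ℕ) ≤ hi) ↔ (lo ≤ (b:ℕ) ∧ (b:ℕ) ≤ hi))) :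
    ∀ a b : Fin n, TS n j T (inl a) (inr b) →
      ((lo ≤ (a:ℕ) ∧ (a:ℕ) ≤ hi) ↔ (lo ≤ (b:ℕ) ∧ (b:ℕ) ≤ hi)) := by
  rintro a b ⟨_, _, h | ⟨c, d, hc, hd, h1, h2⟩ | ⟨c, d, hc, hd, h1, h2⟩⟩
  · exact hV _ _ h
  · exact iff_of_true (hTT _ _ h1).1 ((hV _ _ h2).1 (by omega))
  · exact iff_of_true (hTT _ _ h1).1 ((hV _ _ h2).1 (by omega))

lemma TS_vert {n j lo hi : ℕ} (hlo : lo ≤ j) (hhi : j + 1 ≤ hi) {T : MDiag n}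
    (hTT : ∀ a b : Fin n, T (inl a) (inl b) →
      (lo ≤ (a:ℕ) ∧ (a:ℕ) ≤ hi) ∧ (lo ≤ (b:ℕ) ∧ (b:ℕ) ≤ hi))
    (hvert : ∀ a b : Fin n, ¬(lo ≤ (a:ℕ) ∧ (a:ℕ) ≤ hi) → (T (inl a) (inr b) ↔ a = b)) :
    ∀ a b : Fin n, ¬(lo ≤ (a:ℕ) ∧ (a:ℕ) ≤ hi) → (TS n j T (inl a) (inr b) ↔ a = b) := by
  intro a b hw
  constructor
  · rintro ⟨_, _, h | ⟨c, d, hc, hd, h1, h2⟩ | ⟨c, d, hc, hd, h1, h2⟩⟩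
    · exact (hvert _ _ hw).1 h
    · exact absurd (hTT _ _ h1).1 hw
    · exact absurd (hTT _ _ h1).1 hw
  · rintro rfl
    exact ⟨by omega, by omega, Or.inl ((hvert _ _ hw).2 rfl)⟩

lemma TS_fn {n j : ℕ} (hj : j + 1 < n) {T : MDiag n}
    (hsym : ∀ x y, T x y → T y x) (hfn : ∀ x y z, T x y → T x z → y = z) :
    ∀ x y z, TS n j T x y → TS n j T x z → y = z := by
  have hjn : j < n := by omega
  set p : Fin n := ⟨j, hjn⟩ with hp
  set q : Fin n := ⟨j + 1, hj⟩ with hq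
  have hpq : (inl p : MVert n) ≠ inl q := by
    intro h
    have := congrArg (Sum.elim Fin.val Fin.val) h
    simp [hp, hq] at this
  have neq : ∀ (u' c : Fin n), (u' : ℕ) ≠ (c : ℕ) → (inl u' : MVert n) ≠ inl c :=
    fun u' c h hc => h (congrArg (Sum.elim Fin.val Fin.val) hc)
  have A : ∀ (u : Fin n) (w : MVert n), (u:ℕ) ≠ j → (u:ℕ) ≠ j + 1 → TS n j T (inl u) w →
      ((T (inl u) w ∧ w ≠ inl p ∧ w ≠ inl q) ∨
       (T (inl u) (inl p) ∧ T (inl q) w) ∨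
       (T (inl u) (inl q) ∧ T (inl p) w)) := by
    intro u w hu1 hu2 hw
    rcases w with u' | v
    · rcases hw with ⟨h1, h2⟩ | ⟨h1, h2⟩ | ⟨hne, _, _, hv1, hv2, h | ⟨a, b, ha, hb, h1, h2⟩ |
        ⟨a, b, ha, hb, h1, h2⟩⟩
      · exact absurd h1 hu1
      · exact absurd h1 hu2
      · exact Or.inl ⟨h, neq _ _ hv1, neq _ _ hv2⟩
      · obtain rfl : a = p := Fin.ext ha
        obtain rfl : b = q := Fin.ext hb
        exact Or.inr (Or.inl ⟨h1, h2⟩)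
      · obtain rfl : a = q := Fin.ext ha
        obtain rfl : b = p := Fin.ext hb
        exact Or.inr (Or.inr ⟨h1, h2⟩)
    · rcases hw with ⟨_, _, h | ⟨a, b, ha, hb, h1, h2⟩ | ⟨a, b, ha, hb, h1, h2⟩⟩
      · exact Or.inl ⟨h, fun hc => Sum.inr_ne_inl hc, fun hc => Sum.inr_ne_inl hc⟩
      · obtain rfl : a = p := Fin.ext ha
        obtain rfl : b = q := Fin.ext hb
        exact Or.inr (Or.inl ⟨h1, h2⟩)
      · obtain rfl : a = q := Fin.ext ha
        obtain rfl : b = p := Fin.ext hb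
        exact Or.inr (Or.inr ⟨h1, h2⟩)
  have B : ∀ (v : Fin n) (w : MVert n), TS n j T (inr v) w →
      ((T (inr v) w ∧ w ≠ inl p ∧ w ≠ inl q) ∨
       (T (inr v) (inl q) ∧ T (inl p) w) ∨
       (T (inr v) (inl p) ∧ T (inl q) w)) := by
    intro v w hw
    rcases w with u | v'
    · rcases hw with ⟨hu1, hu2, h | ⟨a, b, ha, hb, h1, h2⟩ | ⟨a, b, ha, hb, h1, h2⟩⟩
      · exact Or.inl ⟨hsym _ _ h, neq _ _ hu1, neq _ _ hu2⟩
      · obtain rfl : a = p := Fin.ext ha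
        obtain rfl : b = q := Fin.ext hb
        exact Or.inr (Or.inl ⟨hsym _ _ h2, hsym _ _ h1⟩)
      · obtain rfl : a = q := Fin.ext ha
        obtain rfl : b = p := Fin.ext hb
        exact Or.inr (Or.inr ⟨hsym _ _ h2, hsym _ _ h1⟩)
    · rcases hw with h | ⟨hne, ⟨a, b, ha, hb, h1, h2⟩ | ⟨a, b, ha, hb, h1, h2⟩⟩
      · exact Or.inl ⟨h, fun hc => Sum.inr_ne_inl hc, fun hc => Sum.inr_ne_inl hc⟩
      · obtain rfl : a = p := Fin.ext ha
        obtain rfl : b = q := Fin.ext hb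
        exact Or.inr (Or.inr ⟨hsym _ _ h1, h2⟩)
      · obtain rfl : a = q := Fin.ext ha
        obtain rfl : b = p := Fin.ext hb
        exact Or.inr (Or.inl ⟨hsym _ _ h1, h2⟩)
  rintro (u | v) y z hy hz
  · by_cases hu1 : (u:ℕ) = j
    · have C : ∀ w, TS n j T (inl u) w → w = inl q := by
        rintro (u' | v) hw
        · rcases hw with ⟨h1, h2⟩ | ⟨h1, h2⟩ | ⟨_, h3, _⟩
          · exact congrArg inl (Fin.ext h2)
          · omega
          · exact absurd hu1 h3
        · rcases hw with ⟨h3, _⟩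
          exact absurd hu1 h3
      rw [C y hy, C z hz]
    · by_cases hu2 : (u:ℕ) = j + 1
      · have C : ∀ w, TS n j T (inl u) w → w = inl p := by
          rintro (u' | v) hw
          · rcases hw with ⟨h1, h2⟩ | ⟨h1, h2⟩ | ⟨_, _, h3, _⟩
            · omega
            · exact congrArg inl (Fin.ext h2)
            · exact absurd hu2 h3
          · rcases hw with ⟨_, h3, _⟩
            exact absurd hu2 h3
        rw [C y hy, C z hz]
      · rcases A u y hu1 hu2 hy with ⟨e1, n1, n2⟩ | ⟨e1, e2⟩ | ⟨e1, e2⟩ <;>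
          rcases A u z hu1 hu2 hz with ⟨f1, g1, g2⟩ | ⟨f1, f2⟩ | ⟨f1, f2⟩
        · exact hfn _ _ _ e1 f1
        · exact absurd (hfn _ _ _ e1 f1) n1
        · exact absurd (hfn _ _ _ e1 f1) n2
        · exact absurd (hfn _ _ _ f1 e1) g1
        · exact hfn _ _ _ e2 f2
        · exact absurd (hfn _ _ _ e1 f1) hpq
        · exact absurd (hfn _ _ _ f1 e1) g2
        · exact absurd (hfn _ _ _ f1 e1) hpq
        · exact hfn _ _ _ e2 f2
  · rcases B v y hy with ⟨e1, n1, n2⟩ | ⟨e1, e2⟩ | ⟨e1, e2⟩ <;>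
      rcases B v z hz with ⟨f1, g1, g2⟩ | ⟨f1, f2⟩ | ⟨f1, f2⟩
    · exact hfn _ _ _ e1 f1
    · exact absurd (hfn _ _ _ e1 f1) n2
    · exact absurd (hfn _ _ _ e1 f1) n1
    · exact absurd (hfn _ _ _ f1 e1) g2
    · exact hfn _ _ _ e2 f2
    · exact absurd (hfn _ _ _ e1 f1).symm hpq
    · exact absurd (hfn _ _ _ f1 e1) g1
    · exact absurd (hfn _ _ _ f1 e1).symm hpq
    · exact hfn _ _ _ e2 f2

section Conj
variable {n j' : ℕ} {T T' : MDiag n}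

lemma TS_conj_tt (hn : j' + 2 < n)
    (ctt : ∀ (a b : Fin n) (ha : (a:ℕ) + 1 < n) (hb : (b:ℕ) + 1 < n),
      T' (inl a) (inl b) ↔ T (inl ⟨(a:ℕ)+1, ha⟩) (inl ⟨(b:ℕ)+1, hb⟩)) :
    ∀ (a b : Fin n) (ha : (a:ℕ) + 1 < n) (hb : (b:ℕ) + 1 < n),
      TS n j' T' (inl a) (inl b) ↔ TS n (j'+1) T (inl ⟨(a:ℕ)+1, ha⟩) (inl ⟨(b:ℕ)+1, hb⟩) := by
  intro a b ha hb
  have hn0 : j' < n := by omega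
  have hn1 : j' + 1 < n := by omega
  constructor
  · rintro (⟨h1, h2⟩ | ⟨h1, h2⟩ | ⟨hne, w1, w2, w3, w4, inner⟩)
    · exact Or.inl ⟨show (a:ℕ)+1 = j'+1 by omega, show (b:ℕ)+1 = j'+1+1 by omega⟩
    · exact Or.inr (Or.inl ⟨show (a:ℕ)+1 = j'+1+1 by omega, show (b:ℕ)+1 = j'+1 by omega⟩)
    · refine Or.inr (Or.inr ⟨fun h => hne (Fin.ext (Nat.succ_injective (congrArg Fin.val h))),
        show (a:ℕ)+1 ≠ j'+1 by omega, show (a:ℕ)+1 ≠ j'+1+1 by omega,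
        show (b:ℕ)+1 ≠ j'+1 by omega, show (b:ℕ)+1 ≠ j'+1+1 by omega, ?_⟩)
      rcases inner with h | ⟨c, d, hc, hd, h1, h2⟩ | ⟨c, d, hc, hd, h1, h2⟩
      · exact Or.inl ((ctt a b ha hb).1 h)
      · obtain rfl : c = ⟨j', hn0⟩ := Fin.ext hc
        obtain rfl : d = ⟨j'+1, hn1⟩ := Fin.ext hd
        exact Or.inr (Or.inl ⟨⟨j'+1, hn1⟩, ⟨j'+2, hn⟩, rfl, rfl,
          (ctt _ _ ha hn1).1 h1, (ctt _ _ hn hb).1 h2⟩)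
      · obtain rfl : c = ⟨j'+1, hn1⟩ := Fin.ext hc
        obtain rfl : d = ⟨j', hn0⟩ := Fin.ext hd
        exact Or.inr (Or.inr ⟨⟨j'+2, hn⟩, ⟨j'+1, hn1⟩, rfl, rfl,
          (ctt _ _ ha hn).1 h1, (ctt _ _ hn1 hb).1 h2⟩)
  · rintro (⟨h1, h2⟩ | ⟨h1, h2⟩ | ⟨hne, w1, w2, w3, w4, inner⟩)
    · have h1' : (a:ℕ)+1 = j'+1 := h1
      have h2' : (b:ℕ)+1 = j'+1+1 := h2
      exact Or.inl ⟨by omega, by omega⟩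
    · have h1' : (a:ℕ)+1 = j'+1+1 := h1
      have h2' : (b:ℕ)+1 = j'+1 := h2
      exact Or.inr (Or.inl ⟨by omega, by omega⟩)
    · have w1' : (a:ℕ)+1 ≠ j'+1 := w1
      have w2' : (a:ℕ)+1 ≠ j'+1+1 := w2
      have w3' : (b:ℕ)+1 ≠ j'+1 := w3
      have w4' : (b:ℕ)+1 ≠ j'+1+1 := w4
      refine Or.inr (Or.inr ⟨fun h => hne (Fin.ext (congrArg (fun z : Fin n => (z:ℕ)+1) h)), by omega, by omega, by omega, by omega, ?_⟩)
      rcases inner with h | ⟨c, d, hc, hd, h1, h2⟩ | ⟨c, d, hc, hd, h1, h2⟩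
      · exact Or.inl ((ctt a b ha hb).2 h)
      · obtain rfl : c = ⟨j'+1, hn1⟩ := Fin.ext hc
        obtain rfl : d = ⟨j'+2, hn⟩ := Fin.ext hd
        exact Or.inr (Or.inl ⟨⟨j', hn0⟩, ⟨j'+1, hn1⟩, rfl, rfl,
          (ctt _ _ ha hn1).2 h1, (ctt _ _ hn hb).2 h2⟩)
      · obtain rfl : c = ⟨j'+2, hn⟩ := Fin.ext hc
        obtain rfl : d = ⟨j'+1, hn1⟩ := Fin.ext hd
        exact Or.inr (Or.inr ⟨⟨j'+1, hn1⟩, ⟨j', hn0⟩, rfl, rfl,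
          (ctt _ _ ha hn).2 h1, (ctt _ _ hn1 hb).2 h2⟩)

lemma TS_conj_tb (hn : j' + 2 < n)
    (ctt : ∀ (a b : Fin n) (ha : (a:ℕ) + 1 < n) (hb : (b:ℕ) + 1 < n),
      T' (inl a) (inl b) ↔ T (inl ⟨(a:ℕ)+1, ha⟩) (inl ⟨(b:ℕ)+1, hb⟩))
    (ctb : ∀ (a b : Fin n) (ha : (a:ℕ) + 1 < n) (hb : (b:ℕ) + 1 < n),
      T' (inl a) (inr b) ↔ T (inl ⟨(a:ℕ)+1, ha⟩) (inr ⟨(b:ℕ)+1, hb⟩)) :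
    ∀ (a b : Fin n) (ha : (a:ℕ) + 1 < n) (hb : (b:ℕ) + 1 < n),
      TS n j' T' (inl a) (inr b) ↔ TS n (j'+1) T (inl ⟨(a:ℕ)+1, ha⟩) (inr ⟨(b:ℕ)+1, hb⟩) := by
  intro a b ha hb
  have hn0 : j' < n := by omega
  have hn1 : j' + 1 < n := by omega
  constructor
  · rintro ⟨w1, w2, inner⟩
    refine ⟨show (a:ℕ)+1 ≠ j'+1 by omega, show (a:ℕ)+1 ≠ j'+1+1 by omega, ?_⟩
    rcases inner with h | ⟨c, d, hc, hd, h1, h2⟩ | ⟨c, d, hc, hd, h1, h2⟩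
    · exact Or.inl ((ctb a b ha hb).1 h)
    · obtain rfl : c = ⟨j', hn0⟩ := Fin.ext hc
      obtain rfl : d = ⟨j'+1, hn1⟩ := Fin.ext hd
      exact Or.inr (Or.inl ⟨⟨j'+1, hn1⟩, ⟨j'+2, hn⟩, rfl, rfl,
        (ctt _ _ ha hn1).1 h1, (ctb _ _ hn hb).1 h2⟩)
    · obtain rfl : c = ⟨j'+1, hn1⟩ := Fin.ext hc
      obtain rfl : d = ⟨j', hn0⟩ := Fin.ext hd
      exact Or.inr (Or.inr ⟨⟨j'+2, hn⟩, ⟨j'+1, hn1⟩, rfl, rfl,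
        (ctt _ _ ha hn).1 h1, (ctb _ _ hn1 hb).1 h2⟩)
  · rintro ⟨w1, w2, inner⟩
    have w1' : (a:ℕ)+1 ≠ j'+1 := w1
    have w2' : (a:ℕ)+1 ≠ j'+1+1 := w2
    refine ⟨by omega, by omega, ?_⟩
    rcases inner with h | ⟨c, d, hc, hd, h1, h2⟩ | ⟨c, d, hc, hd, h1, h2⟩
    · exact Or.inl ((ctb a b ha hb).2 h)
    · obtain rfl : c = ⟨j'+1, hn1⟩ := Fin.ext hc
      obtain rfl : d = ⟨j'+2, hn⟩ := Fin.ext hd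
      exact Or.inr (Or.inl ⟨⟨j', hn0⟩, ⟨j'+1, hn1⟩, rfl, rfl,
        (ctt _ _ ha hn1).2 h1, (ctb _ _ hn hb).2 h2⟩)
    · obtain rfl : c = ⟨j'+2, hn⟩ := Fin.ext hc
      obtain rfl : d = ⟨j'+1, hn1⟩ := Fin.ext hd
      exact Or.inr (Or.inr ⟨⟨j'+1, hn1⟩, ⟨j', hn0⟩, rfl, rfl,
        (ctt _ _ ha hn).2 h1, (ctb _ _ hn1 hb).2 h2⟩)

lemma TS_conj_bb (hn : j' + 2 < n)
    (ctb : ∀ (a b : Fin n) (ha : (a:ℕ) + 1 < n) (hb : (b:ℕ) + 1 < n),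
      T' (inl a) (inr b) ↔ T (inl ⟨(a:ℕ)+1, ha⟩) (inr ⟨(b:ℕ)+1, hb⟩))
    (cbb : ∀ (a b : Fin n) (ha : (a:ℕ) + 1 < n) (hb : (b:ℕ) + 1 < n),
      T' (inr a) (inr b) ↔ T (inr ⟨(a:ℕ)+1, ha⟩) (inr ⟨(b:ℕ)+1, hb⟩)) :
    ∀ (a b : Fin n) (ha : (a:ℕ) + 1 < n) (hb : (b:ℕ) + 1 < n),
      TS n j' T' (inr a) (inr b) ↔ TS n (j'+1) T (inr ⟨(a:ℕ)+1, ha⟩) (inr ⟨(b:ℕ)+1, hb⟩) := by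
  intro a b ha hb
  have hn0 : j' < n := by omega
  have hn1 : j' + 1 < n := by omega
  constructor
  · rintro (h | ⟨hne, ⟨c, d, hc, hd, h1, h2⟩ | ⟨c, d, hc, hd, h1, h2⟩⟩)
    · exact Or.inl ((cbb a b ha hb).1 h)
    · obtain rfl : c = ⟨j', hn0⟩ := Fin.ext hc
      obtain rfl : d = ⟨j'+1, hn1⟩ := Fin.ext hd
      exact Or.inr ⟨fun h => hne (Fin.ext (Nat.succ_injective (congrArg Fin.val h))),
        Or.inl ⟨⟨j'+1, hn1⟩, ⟨j'+2, hn⟩, rfl, rfl, (ctb _ _ hn1 ha).1 h1, (ctb _ _ hn hb).1 h2⟩⟩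
    · obtain rfl : c = ⟨j'+1, hn1⟩ := Fin.ext hc
      obtain rfl : d = ⟨j', hn0⟩ := Fin.ext hd
      exact Or.inr ⟨fun h => hne (Fin.ext (Nat.succ_injective (congrArg Fin.val h))),
        Or.inr ⟨⟨j'+2, hn⟩, ⟨j'+1, hn1⟩, rfl, rfl, (ctb _ _ hn ha).1 h1, (ctb _ _ hn1 hb).1 h2⟩⟩
  · rintro (h | ⟨hne, ⟨c, d, hc, hd, h1, h2⟩ | ⟨c, d, hc, hd, h1, h2⟩⟩)
    · exact Or.inl ((cbb a b ha hb).2 h)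
    · obtain rfl : c = ⟨j'+1, hn1⟩ := Fin.ext hc
      obtain rfl : d = ⟨j'+2, hn⟩ := Fin.ext hd
      exact Or.inr ⟨fun h => hne (Fin.ext (congrArg (fun z : Fin n => (z:ℕ)+1) h)),
        Or.inl ⟨⟨j', hn0⟩, ⟨j'+1, hn1⟩, rfl, rfl, (ctb _ _ hn1 ha).2 h1, (ctb _ _ hn hb).2 h2⟩⟩
    · obtain rfl : c = ⟨j'+2, hn⟩ := Fin.ext hc
      obtain rfl : d = ⟨j'+1, hn1⟩ := Fin.ext hd
      exact Or.inr ⟨fun h => hne (Fin.ext (congrArg (fun z : Fin n => (z:ℕ)+1) h)),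
        Or.inr ⟨⟨j'+1, hn1⟩, ⟨j', hn0⟩, rfl, rfl, (ctb _ _ hn ha).2 h1, (ctb _ _ hn1 hb).2 h2⟩⟩

end Conj

structure SlideInv (n i k : ℕ) (T T' : MDiag n) : Prop where
  sym : ∀ x y, T x y → T y x
  fn : ∀ x y z, T x y → T x z → y = z
  irt : ∀ a : Fin n, ¬ T (inl a) (inl a)
  irb : ∀ a : Fin n, ¬ T (inr a) (inr a)
  sym' : ∀ x y, T' x y → T' y x
  fn' : ∀ x y z, T' x y → T' x z → y = z
  irt' : ∀ a : Fin n, ¬ T' (inl a) (inl a)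
  irb' : ∀ a : Fin n, ¬ T' (inr a) (inr a)
  suppTT : ∀ a b : Fin n, T (inl a) (inl b) →
    (i+1 ≤ (a:ℕ) ∧ (a:ℕ) ≤ k) ∧ (i+1 ≤ (b:ℕ) ∧ (b:ℕ) ≤ k)
  suppBB : ∀ a b : Fin n, T (inr a) (inr b) →
    (i+1 ≤ (a:ℕ) ∧ (a:ℕ) ≤ k) ∧ (i+1 ≤ (b:ℕ) ∧ (b:ℕ) ≤ k)
  suppV : ∀ a b : Fin n, T (inl a) (inr b) →
    ((i+1 ≤ (a:ℕ) ∧ (a:ℕ) ≤ k) ↔ (i+1 ≤ (b:ℕ) ∧ (b:ℕ) ≤ k))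
  vert : ∀ a b : Fin n, ¬(i+1 ≤ (a:ℕ) ∧ (a:ℕ) ≤ k) → (T (inl a) (inr b) ↔ a = b)
  suppTT' : ∀ a b : Fin n, T' (inl a) (inl b) →
    (i ≤ (a:ℕ) ∧ (a:ℕ) ≤ k-1) ∧ (i ≤ (b:ℕ) ∧ (b:ℕ) ≤ k-1)
  suppBB' : ∀ a b : Fin n, T' (inr a) (inr b) →
    (i ≤ (a:ℕ) ∧ (a:ℕ) ≤ k-1) ∧ (i ≤ (b:ℕ) ∧ (b:ℕ) ≤ k-1)
  suppV' : ∀ a b : Fin n, T' (inl a) (inr b) →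
    ((i ≤ (a:ℕ) ∧ (a:ℕ) ≤ k-1) ↔ (i ≤ (b:ℕ) ∧ (b:ℕ) ≤ k-1))
  vert' : ∀ a b : Fin n, ¬(i ≤ (a:ℕ) ∧ (a:ℕ) ≤ k-1) → (T' (inl a) (inr b) ↔ a = b)
  ctt : ∀ (a b : Fin n) (ha : (a:ℕ) + 1 < n) (hb : (b:ℕ) + 1 < n),
    T' (inl a) (inl b) ↔ T (inl ⟨(a:ℕ)+1, ha⟩) (inl ⟨(b:ℕ)+1, hb⟩)
  ctb : ∀ (a b : Fin n) (ha : (a:ℕ) + 1 < n) (hb : (b:ℕ) + 1 < n),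
    T' (inl a) (inr b) ↔ T (inl ⟨(a:ℕ)+1, ha⟩) (inr ⟨(b:ℕ)+1, hb⟩)
  cbb : ∀ (a b : Fin n) (ha : (a:ℕ) + 1 < n) (hb : (b:ℕ) + 1 < n),
    T' (inr a) (inr b) ↔ T (inr ⟨(a:ℕ)+1, ha⟩) (inr ⟨(b:ℕ)+1, hb⟩)

lemma slideInv_id (n i k : ℕ) : SlideInv n i k (iddiag n) (iddiag n) := by
  refine ⟨?_, ?_, ?_, ?_, ?_, ?_, ?_, ?_, ?_, ?_, ?_, ?_, ?_, ?_, ?_, ?_, ?_, ?_, ?_⟩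
  · rintro (a | a) (b | b) h <;> first | exact h.elim | exact h.symm
  · rintro (a | a) (b | b) (c | c) h1 h2 <;>
      first
      | exact h1.elim | exact h2.elim
      | exact congrArg _ (h1.symm.trans h2)
  · exact fun a h => h
  · exact fun a h => h
  · rintro (a | a) (b | b) h <;> first | exact h.elim | exact h.symm
  · rintro (a | a) (b | b) (c | c) h1 h2 <;>
      first
      | exact h1.elim | exact h2.elim
      | exact congrArg _ (h1.symm.trans h2)
  · exact fun a h => h
  · exact fun a h => h
  · exact fun a b h => h.elim
  · exact fun a b h => h.elim
  · intro a b h; cases h; exact Iff.rfl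
  · exact fun a b _ => Iff.rfl
  · exact fun a b h => h.elim
  · exact fun a b h => h.elim
  · intro a b h; cases h; exact Iff.rfl
  · exact fun a b _ => Iff.rfl
  · exact fun a b ha hb => Iff.of_eq (propext ⟨fun h => h.elim, fun h => h.elim⟩)
  · intro a b ha hb
    constructor
    · exact fun h => Fin.ext (congrArg (fun z : Fin n => (z:ℕ)+1) h)
    · exact fun h => Fin.ext (Nat.succ_injective (congrArg Fin.val h))
  · exact fun a b ha hb => Iff.of_eq (propext ⟨fun h => h.elim, fun h => h.elim⟩)

lemma slideInv_step {n i k j : ℕ} {T T' : MDiag n} (inv : SlideInv n i k T T')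
    (hij : i + 1 ≤ j) (hjk : j + 1 ≤ k) (hkn : k < n) :
    SlideInv n i k (TS n j T) (TS n (j-1) T') := by
  obtain ⟨j', rfl⟩ : ∃ j', j = j' + 1 := ⟨j - 1, by omega⟩
  simp only [Nat.add_sub_cancel]
  have hn : j' + 2 < n := by omega
  have hj1 : (j' + 1) + 1 < n := by omega
  have hj0 : j' + 1 < n := by omega
  exact
  { sym := TS_sym inv.sym
    fn := TS_fn hj1 inv.sym inv.fn
    irt := TS_irt
    irb := TS_irb inv.irb
    sym' := TS_sym inv.sym'
    fn' := TS_fn hj0 inv.sym' inv.fn'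
    irt' := TS_irt
    irb' := TS_irb inv.irb'
    suppTT := TS_suppTT (by omega) (by omega) inv.suppTT
    suppBB := TS_suppBB (by omega) (by omega) inv.suppBB inv.suppV
    suppV := TS_suppV (by omega) (by omega) inv.suppTT inv.suppV
    vert := TS_vert (by omega) (by omega) inv.suppTT inv.vert
    suppTT' := TS_suppTT (by omega) (by omega) inv.suppTT'
    suppBB' := TS_suppBB (by omega) (by omega) inv.suppBB' inv.suppV'
    suppV' := TS_suppV (by omega) (by omega) inv.suppTT' inv.suppV'
    vert' := TS_vert (by omega) (by omega) inv.suppTT' inv.vert'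
    ctt := TS_conj_tt hn inv.ctt
    ctb := TS_conj_tb hn inv.ctt inv.ctb
    cbb := TS_conj_bb hn inv.ctb inv.cbb }

lemma dprod_T_inv {n i k : ℕ} (hik : i < k) (hkn : k < n) :
    ∀ J : List ℕ, (∀ j ∈ J, i + 1 ≤ j ∧ j ≤ k - 1) →
    SlideInv n i k (dprod n (J.map (tdiag n)))
      (dprod n (J.map (fun j => tdiag n (j-1)))) := by
  intro J hJ
  induction J with
  | nil => exact slideInv_id n i k
  | cons j J ih =>
    have hj := hJ j (by simp)
    have hij : i + 1 ≤ j := hj.1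
    have hjk : j + 1 ≤ k := by omega
    have ihv := ih (fun x hx => hJ x (by simp [hx]))
    have h1 : dprod n ((j :: J).map (tdiag n)) = TS n j (dprod n (J.map (tdiag n))) := by
      show dcomp (tdiag n j) _ = _
      exact dcomp_tdiag (by omega) _ ihv.sym ihv.fn ihv.irt
    have h2 : dprod n ((j :: J).map (fun j => tdiag n (j-1))) =
        TS n (j-1) (dprod n (J.map (fun j => tdiag n (j-1)))) := by
      show dcomp (tdiag n (j-1)) _ = _
      exact dcomp_tdiag (by omega) _ ihv.sym' ihv.fn' ihv.irt'
    rw [h1, h2]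
    exact slideInv_step ihv hij hjk hkn

/-- The diagram of `l_{k-1} l_{k-2} ⋯ l_i` : a shift sending top `a` to bottom `a+1`
for `i ≤ a < k`, identity outside `[i,k]`, top `k` and bottom `i` empty. -/
def Ldiag (n i k : ℕ) : MDiag n := fun x y =>
  match x, y with
  | inl a, inr b =>
      (i ≤ (a:ℕ) ∧ (a:ℕ) < k ∧ (b:ℕ) = (a:ℕ)+1) ∨ (((a:ℕ) < i ∨ k < (a:ℕ)) ∧ a = b)
  | inr b, inl a =>
      (i ≤ (a:ℕ) ∧ (a:ℕ) < k ∧ (b:ℕ) = (a:ℕ)+1) ∨ (((a:ℕ) < i ∨ k < (a:ℕ)) ∧ a = b)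
  | _, _ => False

lemma dreach_ldiag_eq {n a : ℕ} {D : MDiag n}
    (hD : ∀ m m' : Fin n, ¬ D (inl m) (inl m')) {m m' : Fin n}
    (h : dreach (ldiag n a) D m m') : m = m' := by
  refine rtg_bot (ReflTransGen.mono ?_ _ _ h)
  rintro x y (hx | hx)
  · exact hx
  · exact hD _ _ hx

lemma Ldiag_no_tt {n i k : ℕ} : ∀ m m' : Fin n, ¬ Ldiag n i k (inl m) (inl m') :=
  fun _ _ h => h

lemma iddiag_no_tt {n : ℕ} : ∀ m m' : Fin n, ¬ iddiag n (inl m) (inl m') :=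
  fun _ _ h => h

lemma ldiag_base (n i : ℕ) : dcomp (ldiag n i) (iddiag n) = Ldiag n i (i+1) := by
  funext x y
  apply propext
  rcases x with u | v <;> rcases y with u' | v'
  · constructor
    · rintro (h | ⟨hne, m, m', h1, h2, h3⟩)
      · exact h.elim
      · obtain rfl : m = m' := dreach_ldiag_eq iddiag_no_tt h2
        rcases h1 with ⟨hu, hm⟩ | ⟨rfl, hu1, hu2⟩ <;> rcases h3 with ⟨hu', hm'⟩ | ⟨heq, hu1', hu2'⟩
        · exact hne (Fin.ext (by omega))
        · exact absurd hm (by omega)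
        · exact absurd hm' (by omega)
        · exact hne (heq.symm ▸ rfl)
    · exact fun h => h.elim
  · constructor
    · rintro ⟨m, m', h1, h2, h3⟩
      obtain rfl : m = m' := dreach_ldiag_eq iddiag_no_tt h2
      obtain rfl : m = v' := h3
      rcases h1 with ⟨hu, hm⟩ | ⟨rfl, hu1, hu2⟩
      · exact Or.inl ⟨by omega, by omega, by omega⟩
      · exact Or.inr ⟨by omega, rfl⟩
    · rintro (⟨h1, h2, h3⟩ | ⟨h1, rfl⟩)
      · refine ⟨v', v', Or.inl ⟨by omega, by omega⟩, ReflTransGen.refl, rfl⟩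
      · exact ⟨u, u, Or.inr ⟨rfl, by omega, by omega⟩, ReflTransGen.refl, rfl⟩
  · constructor
    · rintro ⟨m, m', h1, h2, h3⟩
      obtain rfl : m = m' := dreach_ldiag_eq iddiag_no_tt h2
      obtain rfl : m = v := h3
      rcases h1 with ⟨hu, hm⟩ | ⟨rfl, hu1, hu2⟩
      · exact Or.inl ⟨by omega, by omega, by omega⟩
      · exact Or.inr ⟨by omega, rfl⟩
    · rintro (⟨h1, h2, h3⟩ | ⟨h1, rfl⟩)
      · refine ⟨v, v, Or.inl ⟨by omega, by omega⟩, ReflTransGen.refl, rfl⟩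
      · exact ⟨u', u', Or.inr ⟨rfl, by omega, by omega⟩, ReflTransGen.refl, rfl⟩
  · constructor
    · rintro (h | ⟨hne, m, m', h1, h2, h3⟩)
      · exact h.elim
      · obtain rfl : m = m' := dreach_ldiag_eq iddiag_no_tt h2
        obtain rfl : m = v := h1
        exact hne h3
    · exact fun h => h.elim

lemma ldiag_step (n i k : ℕ) (hik : i ≤ k) :
    dcomp (ldiag n k) (Ldiag n i k) = Ldiag n i (k+1) := by
  funext x y
  apply propext
  have key : ∀ u v : Fin n,
      (∃ m m', ldiag n k (inl u) (inr m) ∧ dreach (ldiag n k) (Ldiag n i k) m m' ∧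
        Ldiag n i k (inl m') (inr v)) ↔ Ldiag n i (k+1) (inl u) (inr v) := by
    intro u v
    constructor
    · rintro ⟨m, m', h1, h2, h3⟩
      obtain rfl : m = m' := dreach_ldiag_eq Ldiag_no_tt h2
      rcases h1 with ⟨hu, hm⟩ | ⟨rfl, hu1, hu2⟩
      · rcases h3 with ⟨h4, h5, h6⟩ | ⟨h4, rfl⟩
        · omega
        · exact Or.inl ⟨by omega, by omega, by omega⟩
      · rcases h3 with ⟨h4, h5, h6⟩ | ⟨h4, rfl⟩
        · exact Or.inl ⟨h4, by omega, h6⟩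
        · exact Or.inr ⟨by omega, rfl⟩
    · rintro (⟨h1, h2, h3⟩ | ⟨h1, rfl⟩)
      · by_cases hc : (u:ℕ) = k
        · exact ⟨v, v, Or.inl ⟨by omega, by omega⟩, ReflTransGen.refl,
            Or.inr ⟨by omega, rfl⟩⟩
        · exact ⟨u, u, Or.inr ⟨rfl, by omega, by omega⟩, ReflTransGen.refl,
            Or.inl ⟨h1, by omega, h3⟩⟩
      · exact ⟨u, u, Or.inr ⟨rfl, by omega, by omega⟩, ReflTransGen.refl,
          Or.inr ⟨by omega, rfl⟩⟩
  rcases x with u | v <;> rcases y with u' | v'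
  · constructor
    · rintro (h | ⟨hne, m, m', h1, h2, h3⟩)
      · exact h.elim
      · obtain rfl : m = m' := dreach_ldiag_eq Ldiag_no_tt h2
        rcases h1 with ⟨hu, hm⟩ | ⟨rfl, hu1, hu2⟩ <;> rcases h3 with ⟨hu', hm'⟩ | ⟨heq, hu1', hu2'⟩
        · exact hne (Fin.ext (by omega))
        · exact absurd hm (by omega)
        · exact absurd hm' (by omega)
        · exact hne (heq.symm ▸ rfl)
    · exact fun h => h.elim
  · exact key u v'
  · exact key u' v
  · constructor
    · rintro (h | ⟨hne, m, m', h1, h2, h3⟩)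
      · exact h.elim
      · obtain rfl : m = m' := dreach_ldiag_eq Ldiag_no_tt h2
        rcases h1 with ⟨hu, hm, hv⟩ | ⟨hm, rfl⟩ <;> rcases h3 with ⟨hu', hm', hv'⟩ | ⟨hm', heq⟩
        · exact hne (Fin.ext (by omega))
        · omega
        · omega
        · exact hne (heq ▸ rfl)
    · exact fun h => h.elim

lemma Lprod_eq {n : ℕ} : ∀ (m i k : ℕ), k = i + m + 1 →
    dprod n ((List.range (k - i)).map (fun j => ldiag n (k - 1 - j))) = Ldiag n i k := by
  intro m
  induction m with
  | zero =>
    rintro i k rfl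
    have h1 : i + 0 + 1 - i = 1 := by omega
    have hr1 : List.range 1 = [0] := rfl
    rw [h1, hr1, List.map_cons, List.map_nil]
    show dcomp (ldiag n (i + 0 + 1 - 1 - 0)) (iddiag n) = _
    have h2 : i + 0 + 1 - 1 - 0 = i := by omega
    rw [h2]
    exact ldiag_base n i
  | succ m ih =>
    intro i k hk
    have h1 : k - i = (m + 1) + 1 := by omega
    rw [h1, List.range_succ_eq_map, List.map_cons, List.map_map]
    have h2 : ((fun j => ldiag n (k - 1 - j)) ∘ Nat.succ) = fun j => ldiag n (k - 1 - 1 - j) := by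
      funext j
      simp only [Function.comp]
      rw [show k - 1 - Nat.succ j = k - 1 - 1 - j from by omega]
    rw [h2]
    show dcomp (ldiag n (k - 1 - 0)) (dprod n ((List.range (m+1)).map
      (fun j => ldiag n (k - 1 - 1 - j)))) = _
    have ihv := ih i (k-1) (by omega)
    have h3 : k - 1 - i = m + 1 := by omega
    rw [h3] at ihv
    have h4 : (fun j => ldiag n (k - 1 - 1 - j)) = fun j => ldiag n (k - 1 - 1 - j) := rfl
    rw [show k - 1 - 0 = k - 1 from by omega, ihv]
    rw [ldiag_step n i (k-1) (by omega), show k - 1 + 1 = k from by omega]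


lemma main_slide {n i k : ℕ} (hik : i < k) (hkn : k < n) {T T' : MDiag n}
    (inv : SlideInv n i k T T') :
    dcomp (Ldiag n i k) T = dcomp T' (Ldiag n i k) := by
  have hsymst : ∀ a b : Fin n, dstep (Ldiag n i k) T a b → dstep (Ldiag n i k) T b a := by
    rintro a b (h | h)
    · exact h.elim
    · exact Or.inr (inv.sym _ _ h)
  have hfnst : ∀ a b c : Fin n, dstep (Ldiag n i k) T a b → dstep (Ldiag n i k) T a c → b = c := by
    rintro a b c (h1 | h1) (h2 | h2) <;>
      first | exact h1.elim | exact h2.elim | exact Sum.inl.inj (inv.fn _ _ _ h1 h2)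
  have hcol1 : ∀ {m m' : Fin n}, dreach (Ldiag n i k) T m m' → m = m' ∨ T (inl m) (inl m') := by
    intro m m' h
    rcases rtg_matching hsymst hfnst h with rfl | (h | h)
    · exact Or.inl rfl
    · exact h.elim
    · exact Or.inr h
  have hsymst' : ∀ a b : Fin n, dstep T' (Ldiag n i k) a b → dstep T' (Ldiag n i k) b a := by
    rintro a b (h | h)
    · exact Or.inl (inv.sym' _ _ h)
    · exact h.elim
  have hfnst' : ∀ a b c : Fin n, dstep T' (Ldiag n i k) a b →
      dstep T' (Ldiag n i k) a c → b = c := by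
    rintro a b c (h1 | h1) (h2 | h2) <;>
      first | exact h1.elim | exact h2.elim | exact Sum.inr.inj (inv.fn' _ _ _ h1 h2)
  have hcol2 : ∀ {m m' : Fin n}, dreach T' (Ldiag n i k) m m' → m = m' ∨ T' (inr m) (inr m') := by
    intro m m' h
    rcases rtg_matching hsymst' hfnst' h with rfl | (h | h)
    · exact Or.inl rfl
    · exact Or.inr h
    · exact h.elim
  have key : ∀ u v : Fin n,
      (∃ m m', Ldiag n i k (inl u) (inr m) ∧ dreach (Ldiag n i k) T m m' ∧
        T (inl m') (inr v)) ↔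
      (∃ m m', T' (inl u) (inr m) ∧ dreach T' (Ldiag n i k) m m' ∧
        Ldiag n i k (inl m') (inr v)) := by
    intro u v
    constructor
    · rintro ⟨m, m', h1, h2, h3⟩
      rcases hcol1 h2 with rfl | hM
      · rcases h1 with ⟨a1, a2, a3⟩ | ⟨a1, rfl⟩
        · -- m = u+1, T (inl m) (inr v)
          have hu1 : (u:ℕ) + 1 < n := Nat.lt_of_le_of_lt a2 hkn
          rw [show m = ⟨(u:ℕ)+1, hu1⟩ from Fin.ext a3] at h3
          have hvW : i+1 ≤ (v:ℕ) ∧ (v:ℕ) ≤ k := (inv.suppV _ v h3).1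
            ⟨show i+1 ≤ (u:ℕ)+1 from by omega, show (u:ℕ)+1 ≤ k from by omega⟩
          have hv1 : ((v:ℕ)-1) + 1 < n := by omega
          have hvn : (v:ℕ)-1 < n := by omega
          rw [show v = ⟨((v:ℕ)-1)+1, hv1⟩ from Fin.ext (show (v:ℕ) = (v:ℕ)-1+1 from by omega)]
            at h3
          have hT' : T' (inl u) (inr ⟨(v:ℕ)-1, hvn⟩) :=
            (inv.ctb u ⟨(v:ℕ)-1, hvn⟩ hu1 hv1).2 h3
          refine ⟨⟨(v:ℕ)-1, hvn⟩, ⟨(v:ℕ)-1, hvn⟩, hT', ReflTransGen.refl, ?_⟩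
          exact Or.inl ⟨show i ≤ (v:ℕ)-1 from by omega, show (v:ℕ)-1 < k from by omega,
            show (v:ℕ) = (v:ℕ)-1+1 from by omega⟩
        · -- vertical : u outside window, m = u
          have huv : u = v := (inv.vert u v (by omega)).1 h3
          refine ⟨u, u, (inv.vert' u u (by omega)).2 rfl, ReflTransGen.refl, ?_⟩
          exact Or.inr ⟨a1, huv⟩
      · exact (Sum.inl_ne_inr (inv.fn _ _ _ (inv.sym _ _ hM) h3)).elim
    · rintro ⟨m, m', h1, h2, h3⟩
      rcases hcol2 h2 with rfl | hM
      · rcases h3 with ⟨b1, b2, b3⟩ | ⟨b1, rfl⟩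
        · -- v = m+1, T' (inl u) (inr m)
          have hmW' : i ≤ (m:ℕ) ∧ (m:ℕ) ≤ k-1 := ⟨b1, by omega⟩
          have huW' : i ≤ (u:ℕ) ∧ (u:ℕ) ≤ k-1 := (inv.suppV' u m h1).2 hmW'
          have hu1 : (u:ℕ) + 1 < n := by omega
          have hm1 : (m:ℕ) + 1 < n := by omega
          rw [show v = ⟨(m:ℕ)+1, hm1⟩ from Fin.ext b3]
          have hT : T (inl ⟨(u:ℕ)+1, hu1⟩) (inr ⟨(m:ℕ)+1, hm1⟩) := (inv.ctb u m hu1 hm1).1 h1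
          refine ⟨⟨(u:ℕ)+1, hu1⟩, ⟨(u:ℕ)+1, hu1⟩, ?_, ReflTransGen.refl, hT⟩
          exact Or.inl ⟨show i ≤ (u:ℕ) from huW'.1, show (u:ℕ) < k from by omega,
            show (u:ℕ)+1 = (u:ℕ)+1 from rfl⟩
        · -- vertical : m outside window', so u = m
          have hnW : ¬(i ≤ (u:ℕ) ∧ (u:ℕ) ≤ k-1) :=
            fun hu => absurd ((inv.suppV' u m h1).1 hu) (by omega)
          obtain rfl : u = m := (inv.vert' u m hnW).1 h1
          refine ⟨u, u, Or.inr ⟨b1, rfl⟩, ReflTransGen.refl, ?_⟩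
          exact (inv.vert u u (by omega)).2 rfl
      · exact (Sum.inl_ne_inr (inv.fn' _ _ _ (inv.sym' _ _ h1) hM)).elim
  funext x y
  apply propext
  rcases x with u | v <;> rcases y with u' | v'
  · constructor
    · rintro (h | ⟨hne, m, m', h1, h2, h3⟩)
      · exact h.elim
      · rcases hcol1 h2 with rfl | hM
        · rcases h1 with ⟨a1, a2, a3⟩ | ⟨a1, rfl⟩ <;> rcases h3 with ⟨b1, b2, b3⟩ | ⟨b1, beq⟩
          · exact absurd (Fin.ext (by omega)) hne
          · obtain rfl : u' = m := beq
            exact absurd b1 (by omega)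
          · exact absurd a1 (by omega)
          · exact absurd beq hne.symm
        · rcases h1 with ⟨a1, a2, a3⟩ | ⟨a1, rfl⟩
          · rcases h3 with ⟨b1, b2, b3⟩ | ⟨b1, beq⟩
            · have hu1 : (u:ℕ) + 1 < n := Nat.lt_of_le_of_lt a2 hkn
              have hu1' : (u':ℕ) + 1 < n := Nat.lt_of_le_of_lt b2 hkn
              rw [show m = ⟨(u:ℕ)+1, hu1⟩ from Fin.ext a3,
                  show m' = ⟨(u':ℕ)+1, hu1'⟩ from Fin.ext b3] at hM
              exact Or.inl ((inv.ctt u u' hu1 hu1').2 hM)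
            · obtain rfl : u' = m' := beq
              have hw := (inv.suppTT _ _ hM).2
              exact absurd b1 (by omega)
          · have hw := (inv.suppTT _ _ hM).1
            exact absurd a1 (by omega)
    · rintro (h | ⟨hne, m, m', h1, h2, h3⟩)
      · have hne : u ≠ u' := fun e => inv.irt' u (e ▸ h)
        have hw := inv.suppTT' _ _ h
        have hu1 : (u:ℕ)+1 < n := by omega
        have hu1' : (u':ℕ)+1 < n := by omega
        refine Or.inr ⟨hne, ⟨(u:ℕ)+1, hu1⟩, ⟨(u':ℕ)+1, hu1'⟩, ?_, ?_, ?_⟩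
        · exact Or.inl ⟨show i ≤ (u:ℕ) from hw.1.1, show (u:ℕ) < k from by omega,
            show (u:ℕ)+1 = (u:ℕ)+1 from rfl⟩
        · exact ReflTransGen.single (Or.inr ((inv.ctt u u' hu1 hu1').1 h))
        · exact Or.inl ⟨show i ≤ (u':ℕ) from hw.2.1, show (u':ℕ) < k from by omega,
            show (u':ℕ)+1 = (u':ℕ)+1 from rfl⟩
      · rcases hcol2 h2 with rfl | hM
        · have := inv.fn' _ _ _ (inv.sym' _ _ h1) (inv.sym' _ _ h3)
          exact absurd (Sum.inl.inj this) hne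
        · exact (Sum.inl_ne_inr (inv.fn' _ _ _ (inv.sym' _ _ h1) hM)).elim
  · exact (key u v')
  · exact (key u' v)
  · constructor
    · rintro (h | ⟨hne, m, m', h1, h2, h3⟩)
      · have hne : v ≠ v' := fun e => inv.irb v (e ▸ h)
        have hw := inv.suppBB _ _ h
        have hv1 : ((v:ℕ)-1)+1 < n := by omega
        have hv1' : ((v':ℕ)-1)+1 < n := by omega
        have hvn : (v:ℕ)-1 < n := by omega
        have hvn' : (v':ℕ)-1 < n := by omega
        rw [show v = ⟨((v:ℕ)-1)+1, hv1⟩ from Fin.ext (show (v:ℕ) = (v:ℕ)-1+1 from by omega),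
            show v' = ⟨((v':ℕ)-1)+1, hv1'⟩ from
              Fin.ext (show (v':ℕ) = (v':ℕ)-1+1 from by omega)] at h
        refine Or.inr ⟨hne, ⟨(v:ℕ)-1, hvn⟩, ⟨(v':ℕ)-1, hvn'⟩, ?_, ?_, ?_⟩
        · exact Or.inl ⟨show i ≤ (v:ℕ)-1 from by omega, show (v:ℕ)-1 < k from by omega,
            show (v:ℕ) = (v:ℕ)-1+1 from by omega⟩
        · exact ReflTransGen.single (Or.inl
            ((inv.cbb ⟨(v:ℕ)-1, hvn⟩ ⟨(v':ℕ)-1, hvn'⟩ hv1 hv1').2 h))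
        · exact Or.inl ⟨show i ≤ (v':ℕ)-1 from by omega, show (v':ℕ)-1 < k from by omega,
            show (v':ℕ) = (v':ℕ)-1+1 from by omega⟩
      · rcases hcol1 h2 with rfl | hM
        · exact absurd (Sum.inr.inj (inv.fn _ _ _ h1 h3)) hne
        · exact (Sum.inr_ne_inl (inv.fn _ _ _ h1 hM)).elim
    · rintro (h | ⟨hne, m, m', h1, h2, h3⟩)
      · exact h.elim
      · rcases hcol2 h2 with rfl | hM
        · rcases h1 with ⟨a1, a2, a3⟩ | ⟨a1, rfl⟩ <;> rcases h3 with ⟨b1, b2, b3⟩ | ⟨b1, beq⟩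
          · exact absurd (Fin.ext (show (v:ℕ) = (v':ℕ) from by omega)) hne
          · exact absurd b1 (by omega)
          · exact absurd a1 (by omega)
          · exact absurd beq hne
        · have hm := (inv.suppBB' _ _ hM).1
          have hm' := (inv.suppBB' _ _ hM).2
          rcases h1 with ⟨a1, a2, a3⟩ | ⟨a1, rfl⟩
          · rcases h3 with ⟨b1, b2, b3⟩ | ⟨b1, beq⟩
            · have hmn : (m:ℕ)+1 < n := by omega
              have hmn' : (m':ℕ)+1 < n := by omega
              rw [show v = ⟨(m:ℕ)+1, hmn⟩ from Fin.ext a3,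
                  show v' = ⟨(m':ℕ)+1, hmn'⟩ from Fin.ext b3]
              exact Or.inl ((inv.cbb m m' hmn hmn').1 hM)
            · exact absurd b1 (by omega)
          · exact absurd a1 (by omega)

/-- (Slide lemma) In the Motzkin monoid `M_n`, if `T` is a product of generators from
`{t_{i+1}, …, t_{k-1}}`, then `(l_{k-1} l_{k-2} ⋯ l_i) T = T' (l_{k-1} l_{k-2} ⋯ l_i)`
where `T'` is obtained from `T` by replacing each `t_j` with `t_{j-1}`. -/
theorem motzkin_slide (n i k : ℕ) (hik : i < k) (hk : k < n) (J : List ℕ)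
    (hJ : ∀ j ∈ J, i + 1 ≤ j ∧ j ≤ k - 1) :
    dcomp (dprod n ((List.range (k - i)).map (fun j => ldiag n (k - 1 - j))))
        (dprod n (J.map (tdiag n))) =
      dcomp (dprod n (J.map (fun j => tdiag n (j - 1))))
        (dprod n ((List.range (k - i)).map (fun j => ldiag n (k - 1 - j)))) := by
  rw [Lprod_eq (k - i - 1) i k (by omega)]
  exact main_slide hik hk (dprod_T_inv hik hk J hJ)
end Aux
end

section
/- In the Motzkin monoid M_n, let k < n, let E be the product of all p_i for k ≤ i ≤ n, and let T be any product of Temperley-Lieb generators t_j with j ≥ k. Then E · T · E = E. -/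
namespace MotzkinAux

/-- Partial identity diagram: vertical edge at `a` iff `P a`. -/
def edgeP (n : ℕ) (P : ℕ → Prop) : MDiag n := fun x y =>
  match x, y with
  | Sum.inl a, Sum.inr b => a = b ∧ P a
  | Sum.inr a, Sum.inl b => a = b ∧ P a
  | _, _ => False

lemma edgeP_congr {n : ℕ} {P Q : ℕ → Prop} (h : ∀ a < n, (P a ↔ Q a)) :
    edgeP n P = edgeP n Q := by
  funext x y
  cases x <;> cases y <;> simp only [edgeP] <;>
    exact propext (and_congr_right fun _ => h _ (Fin.is_lt _))

lemma reach_left {n k : ℕ} {d1 d2 : MDiag n}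
    (h : ∀ p q : Fin n, dstep d1 d2 p q → k ≤ (p : ℕ)) {m m' : Fin n}
    (hr : dreach d1 d2 m m') (hm : (m : ℕ) < k) : m' = m := by
  rcases hr.cases_head with rfl | ⟨c, hs, _⟩
  · rfl
  · exact absurd (h _ _ hs) (by omega)

lemma reach_right {n k : ℕ} {d1 d2 : MDiag n}
    (h : ∀ p q : Fin n, dstep d1 d2 p q → k ≤ (q : ℕ)) {m m' : Fin n}
    (hr : dreach d1 d2 m m') (hm' : (m' : ℕ) < k) : m = m' := by
  rcases Relation.ReflTransGen.cases_tail hr with rfl | ⟨c, _, hs⟩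
  · rfl
  · exact absurd (h _ _ hs) (by omega)

lemma reach_edgeP {n : ℕ} {P Q : ℕ → Prop} {m m' : Fin n}
    (hr : dreach (edgeP n P) (edgeP n Q) m m') : m' = m := by
  rcases hr.cases_head with rfl | ⟨c, hs, _⟩
  · rfl
  · rcases hs with h | h <;> exact h.elim

lemma pdiag_eq {n i : ℕ} : pdiag n i = edgeP n (fun a => a ≠ i) := by
  funext x y; cases x <;> cases y <;> rfl

lemma iddiag_eq {n : ℕ} : iddiag n = edgeP n (fun _ => True) := by
  funext x y
  cases x <;> cases y <;> simp only [iddiag, edgeP, and_true]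

lemma dcomp_edgeP {n : ℕ} {P Q : ℕ → Prop} :
    dcomp (edgeP n P) (edgeP n Q) = edgeP n (fun a => P a ∧ Q a) := by
  funext x y
  cases x with
  | inl a =>
    cases y with
    | inl b =>
      apply propext
      constructor
      · rintro (h | ⟨hne, m, m', ⟨h1, -⟩, hr, h2, -⟩)
        · exact h.elim
        · subst h1
          have h3 := reach_edgeP hr
          subst h3
          exact (hne h2.symm).elim
      · exact fun h => h.elim
    | inr b =>
      apply propext
      constructor
      · rintro ⟨m, m', ⟨h1, hP⟩, hr, h2, hQ⟩
        subst h1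
        have h3 := reach_edgeP hr
        subst h3
        exact ⟨h2, hP, hQ⟩
      · rintro ⟨h, hP, hQ⟩
        exact ⟨a, a, ⟨rfl, hP⟩, Relation.ReflTransGen.refl, h, hQ⟩
  | inr a =>
    cases y with
    | inl b =>
      apply propext
      constructor
      · rintro ⟨m, m', ⟨h1, hP⟩, hr, h2, hQ⟩
        subst h1
        have h3 := reach_edgeP hr
        subst h3
        exact ⟨h2.symm, h2 ▸ hP, h2 ▸ hQ⟩
      · rintro ⟨h, hP, hQ⟩
        exact ⟨b, b, ⟨rfl, h ▸ hP⟩, Relation.ReflTransGen.refl, h.symm, h ▸ hQ⟩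
    | inr b =>
      apply propext
      constructor
      · rintro (h | ⟨hne, m, m', ⟨h1, -⟩, hr, h2, -⟩)
        · exact h.elim
        · subst h1
          have h3 := reach_edgeP hr
          subst h3
          exact (hne h2).elim
      · exact fun h => h.elim

lemma prod_pdiag {n : ℕ} (k m : ℕ) :
    dprod n ((List.range m).map (fun j => pdiag n (k + j)))
      = edgeP n (fun a => ∀ j < m, a ≠ k + j) := by
  induction m generalizing k with
  | zero =>
    simp only [List.range_zero, List.map_nil, dprod, List.foldr_nil, iddiag_eq]
    exact edgeP_congr (by intro a _; simp)
  | succ m ih =>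
    rw [List.range_succ_eq_map]
    have hmap : ((List.range m).map Nat.succ).map (fun j => pdiag n (k + j))
        = (List.range m).map (fun j => pdiag n (k + 1 + j)) := by
      rw [List.map_map]
      apply List.map_congr_left
      intro j _
      exact congrArg (pdiag n) (by omega)
    rw [List.map_cons, hmap]
    show dcomp (pdiag n (k + 0))
        (dprod n ((List.range m).map (fun j => pdiag n (k + 1 + j)))) = _
    rw [ih (k + 1), pdiag_eq, dcomp_edgeP]
    apply edgeP_congr
    intro a _
    constructor
    · rintro ⟨h0, h⟩ j hj
      rcases j with _ | j
      · omega
      · have := h j (by omega)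
        omega
    · intro h
      refine ⟨by have := h 0 (by omega); omega, fun j hj => ?_⟩
      have := h (j + 1) (by omega)
      omega

/-- Structural invariant of products of TL generators `t_j`, `j ≥ k`. -/
structure Good (n k : ℕ) (T : MDiag n) : Prop where
  g0 : ∀ a : Fin n, (a : ℕ) < k → T (.inl a) (.inr a)
  g1 : ∀ a b : Fin n, T (.inl a) (.inr b) → ((a : ℕ) < k ∨ (b : ℕ) < k) → a = b
  g2 : ∀ a b : Fin n, T (.inl a) (.inl b) → k ≤ (a : ℕ) ∧ k ≤ (b : ℕ)
  g3 : ∀ a b : Fin n, T (.inr a) (.inr b) → k ≤ (a : ℕ) ∧ k ≤ (b : ℕ)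

lemma good_iddiag {n k : ℕ} : Good n k (iddiag n) :=
  ⟨fun _ _ => rfl, fun _ _ h _ => h, fun _ _ h => h.elim, fun _ _ h => h.elim⟩

lemma good_tcomp {n k j : ℕ} (hkj : k ≤ j) {T : MDiag n} (hT : Good n k T) :
    Good n k (dcomp (tdiag n j) T) := by
  have hstep : ∀ p q : Fin n, dstep (tdiag n j) T p q → k ≤ (p : ℕ) ∧ k ≤ (q : ℕ) := by
    rintro p q (h | h)
    · rcases h with ⟨h1, h2⟩ | ⟨h1, h2⟩ <;> omega
    · exact hT.g2 p q h
  constructor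
  · intro a ha
    exact ⟨a, a, ⟨rfl, by omega, by omega⟩, Relation.ReflTransGen.refl, hT.g0 a ha⟩
  · rintro a b ⟨m, m', hm, hr, hTb⟩ hab
    obtain ⟨ham, -, -⟩ := hm
    subst ham
    rcases hab with ha | hb
    · have h2 := reach_left (fun p q hs => (hstep p q hs).1) hr ha
      rw [h2] at hTb
      exact hT.g1 a b hTb (Or.inl ha)
    · have hmb : m' = b := hT.g1 m' b hTb (Or.inr hb)
      rw [hmb] at hr
      exact reach_right (fun p q hs => (hstep p q hs).2) hr hb
  · rintro a b (h | ⟨hne, m, m', hm, hr, hb⟩)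
    · rcases h with ⟨h1, h2⟩ | ⟨h1, h2⟩ <;> omega
    · obtain ⟨ham, -, -⟩ := hm
      subst ham
      obtain ⟨hbm, -, -⟩ := hb
      subst hbm
      constructor <;> by_contra h' <;> push_neg at h'
      · exact hne (reach_left (fun p q hs => (hstep p q hs).1) hr h').symm
      · exact hne (reach_right (fun p q hs => (hstep p q hs).2) hr h')
  · rintro v v' (h | ⟨hne, m, m', hm, hr, hm'⟩)
    · exact hT.g3 v v' h
    · constructor <;> by_contra h' <;> push_neg at h'
      · have h1 : m = v := hT.g1 m v hm (Or.inr h')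
        rw [h1] at hr
        have h2 := reach_left (fun p q hs => (hstep p q hs).1) hr h'
        rw [h2] at hm'
        exact hne (hT.g1 v v' hm' (Or.inl h'))
      · have h1 : m' = v' := hT.g1 m' v' hm' (Or.inr h')
        rw [h1] at hr
        have h2 := reach_right (fun p q hs => (hstep p q hs).2) hr h'
        rw [h2] at hm
        exact hne (hT.g1 v' v hm (Or.inl h')).symm

lemma good_prod {n k : ℕ} (J : List ℕ) (hJ : ∀ j ∈ J, k ≤ j) :
    Good n k (dprod n (J.map (tdiag n))) := by
  induction J with
  | nil => exact good_iddiag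
  | cons j J ih =>
    exact good_tcomp (hJ j (by simp)) (ih fun i hi => hJ i (by simp [hi]))

lemma key {n k : ℕ} {T : MDiag n} (hT : Good n k T) :
    dcomp (dcomp (edgeP n (fun a => a < k)) T) (edgeP n (fun a => a < k))
      = edgeP n (fun a => a < k) := by
  have hstep1 : ∀ p q : Fin n, dstep (edgeP n (fun a => a < k)) T p q →
      k ≤ (p : ℕ) ∧ k ≤ (q : ℕ) := by
    rintro p q (h | h)
    · exact h.elim
    · exact hT.g2 p q h
  have hX1 : ∀ a m : Fin n,
      dcomp (edgeP n (fun a => a < k)) T (.inl a) (.inr m) ↔ (a = m ∧ (a : ℕ) < k) := by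
    intro a m
    constructor
    · rintro ⟨m0, m1, hm0, hr, hTm⟩
      obtain ⟨ham, ha⟩ := hm0
      subst ham
      have h2 := reach_left (fun p q hs => (hstep1 p q hs).1) hr ha
      rw [h2] at hTm
      exact ⟨hT.g1 a m hTm (Or.inl ha), ha⟩
    · rintro ⟨rfl, ha⟩
      exact ⟨a, a, ⟨rfl, ha⟩, Relation.ReflTransGen.refl, hT.g0 a ha⟩
  have hX2 : ∀ a b : Fin n, ¬ dcomp (edgeP n (fun a => a < k)) T (.inl a) (.inl b) := by
    rintro a b (h | ⟨hne, m, m', hm, hr, hb⟩)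
    · exact h.elim
    · obtain ⟨ham, ha⟩ := hm
      subst ham
      have h2 := reach_left (fun p q hs => (hstep1 p q hs).1) hr ha
      rw [h2] at hb
      exact hne hb.1.symm
  have hX3 : ∀ v v' : Fin n, dcomp (edgeP n (fun a => a < k)) T (.inr v) (.inr v') →
      k ≤ (v : ℕ) ∧ k ≤ (v' : ℕ) := by
    rintro v v' (h | ⟨hne, m, m', hm, hr, hm'⟩)
    · exact hT.g3 v v' h
    · constructor <;> by_contra h' <;> push_neg at h'
      · have h1 : m = v := hT.g1 m v hm (Or.inr h')
        rw [h1] at hr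
        have h2 := reach_left (fun p q hs => (hstep1 p q hs).1) hr h'
        rw [h2] at hm'
        exact hne (hT.g1 v v' hm' (Or.inl h'))
      · have h1 : m' = v' := hT.g1 m' v' hm' (Or.inr h')
        rw [h1] at hr
        have h2 := reach_right (fun p q hs => (hstep1 p q hs).2) hr h'
        rw [h2] at hm
        exact hne (hT.g1 v' v hm (Or.inl h')).symm
  have hstep2 : ∀ p q : Fin n,
      dstep (dcomp (edgeP n (fun a => a < k)) T) (edgeP n (fun a => a < k)) p q →
      k ≤ (p : ℕ) ∧ k ≤ (q : ℕ) := by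
    rintro p q (h | h)
    · exact hX3 p q h
    · exact h.elim
  funext x y
  cases x with
  | inl a =>
    cases y with
    | inl b =>
      apply propext
      constructor
      · rintro (h | ⟨hne, m, m', hm, hr, hb⟩)
        · exact absurd h (hX2 a b)
        · obtain ⟨ham, ha⟩ := (hX1 a m).mp hm
          subst ham
          have h2 := reach_left (fun p q hs => (hstep2 p q hs).1) hr ha
          rw [h2] at hb
          obtain ⟨hba, -⟩ := (hX1 b a).mp hb
          exact (hne hba.symm).elim
      · exact fun h => h.elim
    | inr b =>
      apply propext
      constructor
      · rintro ⟨m, m', hm, hr, hb⟩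
        obtain ⟨ham, ha⟩ := (hX1 a m).mp hm
        subst ham
        have h2 := reach_left (fun p q hs => (hstep2 p q hs).1) hr ha
        rw [h2] at hb
        exact hb
      · rintro ⟨hab, ha⟩
        exact ⟨a, a, (hX1 a a).mpr ⟨rfl, ha⟩, Relation.ReflTransGen.refl, hab, ha⟩
  | inr a =>
    cases y with
    | inl b =>
      apply propext
      constructor
      · rintro ⟨m, m', hm, hr, hb⟩
        obtain ⟨hbm, hb'⟩ := (hX1 b m).mp hm
        subst hbm
        have h2 := reach_left (fun p q hs => (hstep2 p q hs).1) hr hb'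
        rw [h2] at hb
        exact ⟨hb.1.symm, hb.1 ▸ hb'⟩
      · rintro ⟨hab, ha⟩
        exact ⟨b, b, (hX1 b b).mpr ⟨rfl, hab ▸ ha⟩, Relation.ReflTransGen.refl,
          hab.symm, hab ▸ ha⟩
    | inr b =>
      apply propext
      constructor
      · rintro (h | ⟨hne, m, m', hm, hr, hb⟩)
        · exact h.elim
        · obtain ⟨ham, ha⟩ := hm
          subst ham
          have h2 := reach_left (fun p q hs => (hstep2 p q hs).1) hr ha
          rw [h2] at hb
          exact (hne hb.1).elim
      · exact fun h => h.elim

end MotzkinAux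

/-- In the Motzkin monoid `M_n`, with `E` the product of all `p_i` for `k ≤ i` (up to the
last vertex, 0-indexed) and `T` any product of Temperley-Lieb generators `t_j` with
`j ≥ k`, one has `E · T · E = E`. -/
theorem motzkin_t_death (n k : ℕ) (hk : k < n) (J : List ℕ)
    (hJ : ∀ j ∈ J, k ≤ j ∧ j + 1 < n) :
    dcomp
        (dcomp (dprod n ((List.range (n - k)).map (fun j => pdiag n (k + j))))
          (dprod n (J.map (tdiag n))))
        (dprod n ((List.range (n - k)).map (fun j => pdiag n (k + j)))) =
      dprod n ((List.range (n - k)).map (fun j => pdiag n (k + j))) := by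
  have hE : dprod n ((List.range (n - k)).map (fun j => pdiag n (k + j)))
      = MotzkinAux.edgeP n (fun a => a < k) := by
    rw [MotzkinAux.prod_pdiag]
    apply MotzkinAux.edgeP_congr
    intro a ha
    constructor
    · intro h
      by_contra h'
      exact h (a - k) (by omega) (by omega)
    · intro h j _
      omega
  rw [hE]
  exact MotzkinAux.key (MotzkinAux.good_prod J fun j hj => (hJ j hj).1)
end

section
/- Every diagram d in the Motzkin monoid M_n factors as d = r · t · l where r ∈ RP_n, t ∈ TL_n, and l ∈ LP_n; here r is the unique right planar rook diagram with top set τ(d) and bottom set {1,...,|τ(d)|}, l is the unique left planar rook diagram with bottom set β(d) and top set {1,...,|β(d)|}, and t is a Temperley-Lieb diagram. -/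
/-- The set of non-empty top vertices `τ(d)` of a diagram. -/
def topSet {n : ℕ} (d : MDiag n) : Set (Fin n) := {a | ∃ y, d (Sum.inl a) y}

/-- The set of non-empty bottom vertices `β(d)` of a diagram. -/
def dbotSet {n : ℕ} (d : MDiag n) : Set (Fin n) := {b | ∃ y, d (Sum.inr b) y}

/-- The position of a vertex in the cyclic boundary order (top row left-to-right,
then bottom row right-to-left). -/
def mpos (n : ℕ) : MVert n → ℕ := fun x =>
  match x with
  | Sum.inl a => (a : ℕ)
  | Sum.inr b => 2 * n - 1 - (b : ℕ)

/-- The edges of `d` are pairwise non-crossing (planarity). -/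
def NonCrossing {n : ℕ} (d : MDiag n) : Prop :=
  ∀ x y u v, d x y → d u v →
    mpos n x < mpos n u → mpos n u < mpos n y → mpos n y < mpos n v → False

/-- `d` is a Motzkin diagram: a symmetric, irreflexive, planar partial matching. -/
def IsMotzkin {n : ℕ} (d : MDiag n) : Prop :=
  (∀ x y, d x y → d y x) ∧ (∀ x, ¬ d x x) ∧
    (∀ x y z, d x y → d x z → y = z) ∧ NonCrossing d

/-- `d` is a Temperley-Lieb diagram: a Motzkin diagram with no empty vertices. -/
def IsTLdiag {n : ℕ} (d : MDiag n) : Prop := IsMotzkin d ∧ ∀ x, ∃ y, d x y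

/-- `d` is a right planar rook diagram: a Motzkin diagram with no horizontal edges,
each edge having its top endpoint weakly to the right of its bottom endpoint. -/
def IsRPdiag {n : ℕ} (d : MDiag n) : Prop :=
  IsMotzkin d ∧ (∀ a b : Fin n, ¬ d (Sum.inl a) (Sum.inl b)) ∧
    (∀ a b : Fin n, ¬ d (Sum.inr a) (Sum.inr b)) ∧
    (∀ a b : Fin n, d (Sum.inl a) (Sum.inr b) → b ≤ a)

/-- `d` is a left planar rook diagram. -/
def IsLPdiag {n : ℕ} (d : MDiag n) : Prop :=
  IsMotzkin d ∧ (∀ a b : Fin n, ¬ d (Sum.inl a) (Sum.inl b)) ∧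
    (∀ a b : Fin n, ¬ d (Sum.inr a) (Sum.inr b)) ∧
    (∀ a b : Fin n, d (Sum.inl a) (Sum.inr b) → a ≤ b)

open Sum

namespace MotzkinAux

variable {n : ℕ}

/-! ### basics about `mpos` -/

lemma mpos_inl (i : Fin n) : mpos n (inl i) = (i : ℕ) := rfl
lemma mpos_inr (j : Fin n) : mpos n (inr j) = 2 * n - 1 - (j : ℕ) := rfl

lemma mpos_inj : Function.Injective (mpos n) := by
  rintro (i | i) (j | j) h <;> simp only [mpos] at h
  · exact congrArg inl (Fin.ext h)
  · have := i.isLt; have := j.isLt; omega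
  · have := i.isLt; have := j.isLt; omega
  · have := i.isLt; have := j.isLt; exact congrArg inr (Fin.ext (by omega))

/-! ### the top/bottom finsets and order embeddings -/

variable (d : MDiag n)

noncomputable def tFin : Finset (Fin n) := (Set.toFinite (topSet d)).toFinset
noncomputable def bFin : Finset (Fin n) := (Set.toFinite (dbotSet d)).toFinset

noncomputable def kT : ℕ := (tFin d).card
noncomputable def kB : ℕ := (bFin d).card

lemma mem_tFin {a : Fin n} : a ∈ tFin d ↔ ∃ y, d (inl a) y := Set.Finite.mem_toFinset _
lemma mem_bFin {b : Fin n} : b ∈ bFin d ↔ ∃ y, d (inr b) y := Set.Finite.mem_toFinset _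

lemma kT_le : kT d ≤ n := le_trans (Finset.card_le_univ _) (by simp)
lemma kB_le : kB d ≤ n := le_trans (Finset.card_le_univ _) (by simp)

noncomputable def eT : Fin (kT d) ↪o Fin n := (tFin d).orderEmbOfFin rfl
noncomputable def eB : Fin (kB d) ↪o Fin n := (bFin d).orderEmbOfFin rfl

lemma eT_mem (p : Fin (kT d)) : eT d p ∈ tFin d := Finset.orderEmbOfFin_mem _ _ _
lemma eB_mem (q : Fin (kB d)) : eB d q ∈ bFin d := Finset.orderEmbOfFin_mem _ _ _

lemma exists_eT {a : Fin n} (ha : a ∈ tFin d) : ∃ p, eT d p = a := by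
  have : a ∈ Set.range (eT d) := by
    have h := Finset.range_orderEmbOfFin (tFin d) (rfl : (tFin d).card = kT d)
    have h2 : a ∈ ((tFin d : Set (Fin n))) := ha
    rw [← h] at h2; exact h2
  exact this

lemma exists_eB {b : Fin n} (hb : b ∈ bFin d) : ∃ q, eB d q = b := by
  have : b ∈ Set.range (eB d) := by
    have h := Finset.range_orderEmbOfFin (bFin d) (rfl : (bFin d).card = kB d)
    have h2 : b ∈ ((bFin d : Set (Fin n))) := hb
    rw [← h] at h2; exact h2
  exact this

lemma le_emb {k : ℕ} (f : Fin k ↪o Fin n) (p : Fin k) : (p : ℕ) ≤ (f p : ℕ) := by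
  induction' hp : (p : ℕ) with i ih generalizing p
  · exact Nat.zero_le _
  · have h1 : i < k := by omega
    have h2 : (⟨i, h1⟩ : Fin k) < p := by simp [Fin.lt_def, hp]
    have hm := f.strictMono h2
    have hi := ih ⟨i, h1⟩ rfl
    rw [Fin.lt_def] at hm
    omega

lemma le_eT (p : Fin (kT d)) : (p : ℕ) ≤ (eT d p : ℕ) := le_emb _ _
lemma le_eB (q : Fin (kB d)) : (q : ℕ) ≤ (eB d q : ℕ) := le_emb _ _

end MotzkinAux
namespace MotzkinAux

variable {n : ℕ} (d : MDiag n)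

/-- correspondence between compressed vertices and original (active) vertices. -/
def corr : MVert n → MVert n → Prop := fun x x' =>
  (∃ p : Fin (kT d), x = inl (Fin.castLE (kT_le d) p) ∧ x' = inl (eT d p)) ∨
  (∃ q : Fin (kB d), x = inr (Fin.castLE (kB_le d) q) ∧ x' = inr (eB d q))

/-- the Temperley-Lieb middle diagram. -/
def tD : MDiag n := fun x y =>
  (∃ x' y', corr d x x' ∧ corr d y y' ∧ d x' y') ∨
  (kT d ≤ mpos n x ∧ kT d ≤ mpos n y ∧ mpos n x + mpos n y + kB d + 1 = 2 * n + kT d)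

/-- the right planar rook diagram. -/
def rD : MDiag n := fun x y => ∃ p : Fin (kT d),
  (x = inl (eT d p) ∧ y = inr (Fin.castLE (kT_le d) p)) ∨
  (x = inr (Fin.castLE (kT_le d) p) ∧ y = inl (eT d p))

/-- the left planar rook diagram. -/
def lD : MDiag n := fun x y => ∃ q : Fin (kB d),
  (x = inl (Fin.castLE (kB_le d) q) ∧ y = inr (eB d q)) ∨
  (x = inr (eB d q) ∧ y = inl (Fin.castLE (kB_le d) q))

variable {d}

lemma corr_left_fun {x x' y'} (h1 : corr d x x') (h2 : corr d x y') : x' = y' := by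
  rcases h1 with ⟨p, hx, hx'⟩ | ⟨q, hx, hx'⟩ <;> rcases h2 with ⟨p', hy, hy'⟩ | ⟨q', hy, hy'⟩ <;>
      subst hx' <;> subst hy' <;> rw [hy] at hx <;>
      simp only [inl.injEq, inr.injEq, reduceCtorEq] at hx
  · exact congrArg _ (congrArg _ (Fin.castLE_injective _ hx.symm))
  · exact congrArg _ (congrArg _ (Fin.castLE_injective _ hx.symm))

lemma corr_right_inj {x y x'} (h1 : corr d x x') (h2 : corr d y x') : x = y := by
  rcases h1 with ⟨p, hx, hx'⟩ | ⟨q, hx, hx'⟩ <;> rcases h2 with ⟨p', hy, hy'⟩ | ⟨q', hy, hy'⟩ <;>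
      subst hx <;> subst hy <;> rw [hy'] at hx' <;>
      simp only [inl.injEq, inr.injEq, reduceCtorEq] at hx'
  · exact congrArg _ (congrArg _ ((eT d).injective hx'.symm))
  · exact congrArg _ (congrArg _ ((eB d).injective hx'.symm))

/-- positions transfer monotonically along `corr`. -/
lemma corr_mpos_lt {x x' y y'} (h1 : corr d x x') (h2 : corr d y y') :
    (mpos n x < mpos n y ↔ mpos n x' < mpos n y') := by
  rcases h1 with ⟨p, hx, hx'⟩ | ⟨q, hx, hx'⟩ <;> rcases h2 with ⟨p', hy, hy'⟩ | ⟨q', hy, hy'⟩ <;>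
      subst hx <;> subst hx' <;> subst hy <;> subst hy' <;>
      simp only [mpos_inl, mpos_inr, Fin.coe_castLE]
  · rw [← Fin.lt_def, ← Fin.lt_def, (eT d).lt_iff_lt]
  · have := (eT d p).isLt; have := (eB d q').isLt
    have := p.isLt; have := q'.isLt; have := kB_le d; have := kT_le d
    constructor <;> intro <;> omega
  · have := (eT d p').isLt; have := (eB d q).isLt
    have := p'.isLt; have := q.isLt; have := kB_le d; have := kT_le d
    constructor <;> intro <;> omega
  · have h1 := (eB d q).isLt; have h2 := (eB d q').isLt
    have h3 := q.isLt; have h4 := q'.isLt; have h5 := kB_le d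
    have : eB d q' < eB d q ↔ q' < q := (eB d).lt_iff_lt
    rw [Fin.lt_def, Fin.lt_def] at this
    omega

lemma corr_outside {x x'} (h : corr d x x') :
    mpos n x < kT d ∨ 2 * n - kB d ≤ mpos n x := by
  rcases h with ⟨p, hx, _⟩ | ⟨q, hx, _⟩ <;> subst hx <;>
    simp only [mpos_inl, mpos_inr, Fin.coe_castLE]
  · exact Or.inl p.isLt
  · have := q.isLt; have := kB_le d; right; omega

lemma corr_of_active_inl {a : Fin n} (ha : a ∈ tFin d) :
    ∃ x, corr d x (inl a) := by
  obtain ⟨p, hp⟩ := exists_eT d ha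
  exact ⟨inl (Fin.castLE (kT_le d) p), Or.inl ⟨p, rfl, by rw [hp]⟩⟩

lemma corr_of_active_inr {b : Fin n} (hb : b ∈ bFin d) :
    ∃ x, corr d x (inr b) := by
  obtain ⟨q, hq⟩ := exists_eB d hb
  exact ⟨inr (Fin.castLE (kB_le d) q), Or.inr ⟨q, rfl, by rw [hq]⟩⟩

end MotzkinAux
namespace MotzkinAux

open Finset in
lemma even_card_of_matching {α : Type*} [DecidableEq α] (R : α → α → Prop)
    (sym : ∀ a b, R a b → R b a) (fn : ∀ a b c, R a b → R a c → b = c)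
    (irr : ∀ a, ¬ R a a) (S : Finset α) (hS : ∀ x ∈ S, ∃ y ∈ S, R x y) :
    Even S.card := by
  induction S using Finset.strongInduction with
  | _ S ih =>
    rcases S.eq_empty_or_nonempty with rfl | ⟨x, hx⟩
    · simp
    · obtain ⟨y, hy, hxy⟩ := hS x hx
      have hne : x ≠ y := fun h => irr x (h ▸ hxy)
      set S' := (S.erase x).erase y with hS'
      have hsub : S' ⊂ S := by
        apply Finset.ssubset_of_subset_of_ssubset (Finset.erase_subset _ _)
        exact Finset.erase_ssubset hx
      have hmem : ∀ z, z ∈ S' ↔ z ∈ S ∧ z ≠ x ∧ z ≠ y := by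
        intro z; simp [hS', and_comm, and_left_comm]; tauto
      have hS'prop : ∀ z ∈ S', ∃ w ∈ S', R z w := by
        intro z hz
        rw [hmem] at hz
        obtain ⟨hzS, hzx, hzy⟩ := hz
        obtain ⟨w, hw, hzw⟩ := hS z hzS
        refine ⟨w, ?_, hzw⟩
        rw [hmem]
        refine ⟨hw, ?_, ?_⟩
        · rintro rfl
          exact hzy (fn _ _ _ hxy (sym _ _ hzw)).symm
        · rintro rfl
          exact hzx (fn _ _ _ (sym _ _ hxy) (sym _ _ hzw)).symm
      have h2 : 2 ≤ S.card := by
        have hsub2 : ({x, y} : Finset α) ⊆ S := by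
          intro z hz
          simp only [Finset.mem_insert, Finset.mem_singleton] at hz
          rcases hz with rfl | rfl <;> assumption
        have := Finset.card_le_card hsub2
        rwa [Finset.card_pair hne] at this
      have hcard : S'.card + 2 = S.card := by
        rw [hS', Finset.card_erase_of_mem (Finset.mem_erase.mpr ⟨hne.symm, hy⟩),
          Finset.card_erase_of_mem hx]
        omega
      have := ih S' hsub hS'prop
      rw [← hcard]
      rcases this with ⟨m, hm⟩
      exact ⟨m + 1, by omega⟩

variable {n : ℕ} {d : MDiag n} (hd : IsMotzkin d)

include hd in
lemma parity : Even (kT d + kB d) := by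
  classical
  set S : Finset (MVert n) :=
    ((tFin d).map ⟨inl, inl_injective⟩) ∪ ((bFin d).map ⟨inr, inr_injective⟩) with hSdef
  have hmem : ∀ x, x ∈ S ↔ ∃ y, d x y := by
    rintro (a | b) <;>
      simp [hSdef, Finset.mem_union, Finset.mem_map, mem_tFin, mem_bFin]
  have hcard : S.card = kT d + kB d := by
    rw [hSdef, Finset.card_union_of_disjoint, Finset.card_map, Finset.card_map]
    · rfl
    · rw [Finset.disjoint_left]
      rintro (a | b) h1 h2 <;> simp [Finset.mem_map] at h1 h2
  rw [← hcard]
  apply even_card_of_matching d hd.1 hd.2.2.1 hd.2.1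
  intro x hx
  rw [hmem] at hx
  obtain ⟨y, hy⟩ := hx
  exact ⟨y, (hmem y).mpr ⟨x, hd.1 x y hy⟩, hy⟩

end MotzkinAux
namespace MotzkinAux

variable {n : ℕ} {d : MDiag n} (hd : IsMotzkin d)

/-- a vertex at a compressed position cannot be an endpoint of a leftover edge. -/
lemma not_leftover_of_corr {x x' y : MVert n} (h : corr d x x')
    (hl : kT d ≤ mpos n x ∧ kT d ≤ mpos n y ∧
      mpos n x + mpos n y + kB d + 1 = 2 * n + kT d) : False := by
  rcases corr_outside h with h' | h' <;> obtain ⟨l1, l2, l3⟩ := hl <;> omega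

include hd in
lemma tD_symm : ∀ x y, tD d x y → tD d y x := by
  rintro x y (⟨x', y', h1, h2, h3⟩ | ⟨h1, h2, h3⟩)
  · exact Or.inl ⟨y', x', h2, h1, hd.1 _ _ h3⟩
  · exact Or.inr ⟨h2, h1, by omega⟩

include hd in
lemma tD_fun : ∀ x y z, tD d x y → tD d x z → y = z := by
  rintro x y z (⟨x', y', h1, h2, h3⟩ | hxy) (⟨x'', z', g1, g2, g3⟩ | hxz)
  · rw [corr_left_fun h1 g1] at h3
    exact corr_right_inj h2 (hd.2.2.1 _ _ _ h3 g3 ▸ g2)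
  · exact absurd hxz (fun hl => not_leftover_of_corr h1 hl)
  · exact absurd hxy (fun hl => not_leftover_of_corr g1 hl)
  · exact mpos_inj (by omega)

include hd in
lemma tD_irrefl : ∀ x, ¬ tD d x x := by
  rintro x (⟨x', y', h1, h2, h3⟩ | ⟨h1, h2, h3⟩)
  · rw [corr_left_fun h1 h2] at h3
    exact hd.2.1 _ h3
  · obtain ⟨c, hc⟩ := parity hd
    omega

include hd in
lemma tD_noncrossing : NonCrossing (tD d) := by
  rintro x y u v (⟨x', y', h1, h2, h3⟩ | ⟨h1, h2, h3⟩) (⟨u', v', g1, g2, g3⟩ | ⟨g1, g2, g3⟩)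
      c1 c2 c3
  · exact hd.2.2.2 x' y' u' v' h3 g3 ((corr_mpos_lt h1 g1).mp c1)
      ((corr_mpos_lt g1 h2).mp c2) ((corr_mpos_lt h2 g2).mp c3)
  · rcases corr_outside h1 with h' | h' <;> rcases corr_outside h2 with h'' | h'' <;> omega
  · rcases corr_outside g1 with h' | h' <;> rcases corr_outside g2 with h'' | h'' <;> omega
  · omega

lemma leftover_partner (m : ℕ) (h1 : kT d ≤ m) (h2 : m + kB d + 1 ≤ 2 * n) :
    ∃ y : MVert n, kT d ≤ mpos n y ∧ m + mpos n y + kB d + 1 = 2 * n + kT d := by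
  set P := 2 * n + kT d - kB d - 1 - m with hP
  by_cases h : P < n
  · refine ⟨inl ⟨P, h⟩, ?_, ?_⟩ <;> simp only [mpos_inl] <;> omega
  · have hn : 1 ≤ n := by omega
    have h' : 2 * n - 1 - P < n := by omega
    refine ⟨inr ⟨2 * n - 1 - P, h'⟩, ?_, ?_⟩ <;> simp only [mpos_inr] <;> omega

lemma corr_of_active {y' : MVert n} (h : ∃ z, d y' z) : ∃ y, corr d y y' := by
  rcases y' with a | b
  · exact corr_of_active_inl ((mem_tFin d).mpr h)
  · exact corr_of_active_inr ((mem_bFin d).mpr h)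

include hd in
lemma tD_total : ∀ x, ∃ y, tD d x y := by
  have hTle := kT_le d; have hBle := kB_le d
  rintro (i | j)
  · by_cases hi : (i : ℕ) < kT d
    · have hx : corr d (inl i) (inl (eT d ⟨i, hi⟩)) :=
        Or.inl ⟨⟨i, hi⟩, congrArg inl (Fin.ext rfl), rfl⟩
      obtain ⟨y', hy'⟩ := (mem_tFin d).mp (eT_mem d ⟨i, hi⟩)
      obtain ⟨y, hy⟩ := corr_of_active (d := d) ⟨_, hd.1 _ _ hy'⟩
      exact ⟨y, Or.inl ⟨_, _, hx, hy, hy'⟩⟩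
    · have := i.isLt
      obtain ⟨y, hy1, hy2⟩ := leftover_partner (d := d) (i : ℕ) (by omega) (by omega)
      exact ⟨y, Or.inr ⟨by simpa [mpos_inl] using Nat.le_of_not_lt hi, hy1, hy2⟩⟩
  · by_cases hj : (j : ℕ) < kB d
    · have hx : corr d (inr j) (inr (eB d ⟨j, hj⟩)) :=
        Or.inr ⟨⟨j, hj⟩, congrArg inr (Fin.ext rfl), rfl⟩
      obtain ⟨y', hy'⟩ := (mem_bFin d).mp (eB_mem d ⟨j, hj⟩)
      obtain ⟨y, hy⟩ := corr_of_active (d := d) ⟨_, hd.1 _ _ hy'⟩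
      exact ⟨y, Or.inl ⟨_, _, hx, hy, hy'⟩⟩
    · have := j.isLt
      obtain ⟨y, hy1, hy2⟩ := leftover_partner (d := d) (2 * n - 1 - (j : ℕ))
        (by omega) (by omega)
      refine ⟨y, Or.inr ⟨?_, hy1, ?_⟩⟩ <;> simp only [mpos_inr] <;> omega

include hd in
lemma tD_isTL : IsTLdiag (tD d) :=
  ⟨⟨tD_symm hd, tD_irrefl hd, tD_fun hd, tD_noncrossing hd⟩, tD_total hd⟩

end MotzkinAux
namespace MotzkinAux

variable {n : ℕ} {d : MDiag n} (hd : IsMotzkin d)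

lemma ncard_top : (topSet d).ncard = kT d :=
  Set.ncard_eq_toFinset_card (topSet d) (Set.toFinite _)

lemma ncard_bot : (dbotSet d).ncard = kB d :=
  Set.ncard_eq_toFinset_card (dbotSet d) (Set.toFinite _)

lemma rD_symm : ∀ x y, rD d x y → rD d y x := by
  rintro x y ⟨p, h | h⟩
  exacts [⟨p, Or.inr ⟨h.2, h.1⟩⟩, ⟨p, Or.inl ⟨h.2, h.1⟩⟩]

lemma rD_fun : ∀ x y z, rD d x y → rD d x z → y = z := by
  rintro x y z ⟨p, ⟨hx, hy⟩ | ⟨hx, hy⟩⟩ ⟨p', ⟨hx', hy'⟩ | ⟨hx', hy'⟩⟩ <;>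
      rw [hx'] at hx <;> simp only [inl.injEq, inr.injEq, reduceCtorEq] at hx
  · rw [hy, hy', (eT d).injective hx]
  · rw [hy, hy', Fin.castLE_injective _ hx]

lemma rD_pos {x y} (h : rD d x y) : ∃ p : Fin (kT d),
    (mpos n x = (eT d p : ℕ) ∧ mpos n y = 2 * n - 1 - (p : ℕ)) ∨
    (mpos n x = 2 * n - 1 - (p : ℕ) ∧ mpos n y = (eT d p : ℕ)) := by
  obtain ⟨p, ⟨hx, hy⟩ | ⟨hx, hy⟩⟩ := h
  · exact ⟨p, Or.inl ⟨by rw [hx]; rfl, by rw [hy]; simp [mpos_inr]⟩⟩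
  · exact ⟨p, Or.inr ⟨by rw [hx]; simp [mpos_inr], by rw [hy]; rfl⟩⟩

lemma rD_noncrossing : NonCrossing (rD d) := by
  intro x y u v h1 h2 c1 c2 c3
  obtain ⟨p, hp⟩ := rD_pos h1
  obtain ⟨p', hp'⟩ := rD_pos h2
  have e1 := (eT d p).isLt; have e2 := (eT d p').isLt
  have f1 := p.isLt; have f2 := p'.isLt
  have hTle := kT_le d
  have k1 := le_eT d p; have k2 := le_eT d p'
  rcases Nat.lt_trichotomy (p : ℕ) (p' : ℕ) with h | h | h
  · have := (eT d).strictMono (show p < p' from h)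
    rw [Fin.lt_def] at this
    rcases hp with h' | h' <;> rcases hp' with h'' | h'' <;> omega
  · have : ((eT d p : Fin n) : ℕ) = ((eT d p' : Fin n) : ℕ) :=
      congrArg (fun z => ((eT d z : Fin n) : ℕ)) (Fin.ext h)
    rcases hp with h' | h' <;> rcases hp' with h'' | h'' <;> omega
  · have := (eT d).strictMono (show p' < p from h)
    rw [Fin.lt_def] at this
    rcases hp with h' | h' <;> rcases hp' with h'' | h'' <;> omega

lemma rD_irrefl : ∀ x, ¬ rD d x x := by
  rintro x ⟨p, ⟨hx, hy⟩ | ⟨hx, hy⟩⟩ <;> rw [hx] at hy <;> first | exact Sum.inl_ne_inr hx | exact Sum.inr_ne_inl hx | exact Sum.inl_ne_inr hy | exact Sum.inr_ne_inl hy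

lemma rD_isRP : IsRPdiag (rD d) := by
  refine ⟨⟨rD_symm, rD_irrefl, rD_fun, rD_noncrossing⟩, ?_, ?_, ?_⟩
  · rintro a b ⟨p, ⟨hx, hy⟩ | ⟨hx, hy⟩⟩ <;> first | exact Sum.inl_ne_inr hx | exact Sum.inr_ne_inl hx | exact Sum.inl_ne_inr hy | exact Sum.inr_ne_inl hy
  · rintro a b ⟨p, ⟨hx, hy⟩ | ⟨hx, hy⟩⟩ <;> first | exact Sum.inl_ne_inr hx | exact Sum.inr_ne_inl hx | exact Sum.inl_ne_inr hy | exact Sum.inr_ne_inl hy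
  · rintro a b ⟨p, ⟨hx, hy⟩ | ⟨hx, hy⟩⟩
    · rw [inl.injEq] at hx; rw [inr.injEq] at hy
      subst hx; subst hy
      rw [Fin.le_def]
      simpa using le_eT d p
    · exact (nomatch hx)

lemma rD_topSet : topSet (rD d) = topSet d := by
  ext a
  constructor
  · rintro ⟨y, p, ⟨hx, hy⟩ | ⟨hx, hy⟩⟩
    · rw [inl.injEq] at hx; subst hx
      exact (mem_tFin d).mp (eT_mem d p)
    · exact (nomatch hx)
  · intro ha
    obtain ⟨p, hp⟩ := exists_eT d ((mem_tFin d).mpr ha)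
    exact ⟨inr (Fin.castLE (kT_le d) p), p, Or.inl ⟨by rw [hp], rfl⟩⟩

lemma rD_botSet : dbotSet (rD d) = {b : Fin n | (b : ℕ) < kT d} := by
  ext b
  constructor
  · rintro ⟨y, p, ⟨hx, hy⟩ | ⟨hx, hy⟩⟩
    · exact (nomatch hx)
    · rw [inr.injEq] at hx; subst hx
      simpa using p.isLt
  · intro hb
    refine ⟨inl (eT d ⟨b, hb⟩), ⟨b, hb⟩, Or.inr ⟨congrArg inr (Fin.ext rfl), rfl⟩⟩

lemma lD_symm : ∀ x y, lD d x y → lD d y x := by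
  rintro x y ⟨q, h | h⟩
  exacts [⟨q, Or.inr ⟨h.2, h.1⟩⟩, ⟨q, Or.inl ⟨h.2, h.1⟩⟩]

lemma lD_fun : ∀ x y z, lD d x y → lD d x z → y = z := by
  rintro x y z ⟨q, ⟨hx, hy⟩ | ⟨hx, hy⟩⟩ ⟨q', ⟨hx', hy'⟩ | ⟨hx', hy'⟩⟩ <;>
      rw [hx'] at hx <;> simp only [inl.injEq, inr.injEq, reduceCtorEq] at hx
  · rw [hy, hy', Fin.castLE_injective _ hx]
  · rw [hy, hy', (eB d).injective hx]

lemma lD_pos {x y} (h : lD d x y) : ∃ q : Fin (kB d),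
    (mpos n x = (q : ℕ) ∧ mpos n y = 2 * n - 1 - ((eB d q : Fin n) : ℕ)) ∨
    (mpos n x = 2 * n - 1 - ((eB d q : Fin n) : ℕ) ∧ mpos n y = (q : ℕ)) := by
  obtain ⟨q, ⟨hx, hy⟩ | ⟨hx, hy⟩⟩ := h
  · exact ⟨q, Or.inl ⟨by rw [hx]; simp [mpos_inl], by rw [hy]; rfl⟩⟩
  · exact ⟨q, Or.inr ⟨by rw [hx]; rfl, by rw [hy]; simp [mpos_inl]⟩⟩

lemma lD_noncrossing : NonCrossing (lD d) := by
  intro x y u v h1 h2 c1 c2 c3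
  obtain ⟨q, hq⟩ := lD_pos h1
  obtain ⟨q', hq'⟩ := lD_pos h2
  have e1 := (eB d q).isLt; have e2 := (eB d q').isLt
  have f1 := q.isLt; have f2 := q'.isLt
  have hBle := kB_le d
  have k1 := le_eB d q; have k2 := le_eB d q'
  rcases Nat.lt_trichotomy (q : ℕ) (q' : ℕ) with h | h | h
  · have := (eB d).strictMono (show q < q' from h)
    rw [Fin.lt_def] at this
    rcases hq with h' | h' <;> rcases hq' with h'' | h'' <;> omega
  · have : ((eB d q : Fin n) : ℕ) = ((eB d q' : Fin n) : ℕ) :=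
      congrArg (fun z => ((eB d z : Fin n) : ℕ)) (Fin.ext h)
    rcases hq with h' | h' <;> rcases hq' with h'' | h'' <;> omega
  · have := (eB d).strictMono (show q' < q from h)
    rw [Fin.lt_def] at this
    rcases hq with h' | h' <;> rcases hq' with h'' | h'' <;> omega

lemma lD_irrefl : ∀ x, ¬ lD d x x := by
  rintro x ⟨q, ⟨hx, hy⟩ | ⟨hx, hy⟩⟩ <;> rw [hx] at hy <;> first | exact Sum.inl_ne_inr hx | exact Sum.inr_ne_inl hx | exact Sum.inl_ne_inr hy | exact Sum.inr_ne_inl hy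

lemma lD_isLP : IsLPdiag (lD d) := by
  refine ⟨⟨lD_symm, lD_irrefl, lD_fun, lD_noncrossing⟩, ?_, ?_, ?_⟩
  · rintro a b ⟨q, ⟨hx, hy⟩ | ⟨hx, hy⟩⟩ <;> first | exact Sum.inl_ne_inr hx | exact Sum.inr_ne_inl hx | exact Sum.inl_ne_inr hy | exact Sum.inr_ne_inl hy
  · rintro a b ⟨q, ⟨hx, hy⟩ | ⟨hx, hy⟩⟩ <;> first | exact Sum.inl_ne_inr hx | exact Sum.inr_ne_inl hx | exact Sum.inl_ne_inr hy | exact Sum.inr_ne_inl hy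
  · rintro a b ⟨q, ⟨hx, hy⟩ | ⟨hx, hy⟩⟩
    · rw [inl.injEq] at hx; rw [inr.injEq] at hy
      subst hx; subst hy
      rw [Fin.le_def]
      simpa using le_eB d q
    · exact (nomatch hx)

lemma lD_botSet : dbotSet (lD d) = dbotSet d := by
  ext b
  constructor
  · rintro ⟨y, q, ⟨hx, hy⟩ | ⟨hx, hy⟩⟩
    · exact (nomatch hx)
    · rw [inr.injEq] at hx; subst hx
      exact (mem_bFin d).mp (eB_mem d q)
  · intro hb
    obtain ⟨q, hq⟩ := exists_eB d ((mem_bFin d).mpr hb)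
    exact ⟨inl (Fin.castLE (kB_le d) q), q, Or.inr ⟨by rw [hq], rfl⟩⟩

lemma lD_topSet : topSet (lD d) = {a : Fin n | (a : ℕ) < kB d} := by
  ext a
  constructor
  · rintro ⟨y, q, ⟨hx, hy⟩ | ⟨hx, hy⟩⟩
    · rw [inl.injEq] at hx; subst hx
      simpa using q.isLt
    · exact (nomatch hx)
  · intro ha
    refine ⟨inr (eB d ⟨a, ha⟩), ⟨a, ha⟩, Or.inl ⟨congrArg inl (Fin.ext rfl), rfl⟩⟩

end MotzkinAux
namespace MotzkinAux

lemma reach_char {α : Type*} {s : α → α → Prop} (sym : ∀ a b, s a b → s b a)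
    (fn : ∀ a b c, s a b → s a c → b = c) {a b : α} :
    Relation.ReflTransGen s a b ↔ a = b ∨ s a b := by
  constructor
  · intro h
    induction h with
    | refl => exact Or.inl rfl
    | tail h1 h2 ih =>
      rcases ih with rfl | hab
      · exact Or.inr h2
      · exact Or.inl (fn _ _ _ (sym _ _ hab) h2)
  · rintro (rfl | h)
    · exact Relation.ReflTransGen.refl
    · exact Relation.ReflTransGen.single h

variable {n : ℕ} {d : MDiag n} (hd : IsMotzkin d)

lemma corr_canonT (p : Fin (kT d)) :
    corr d (inl (Fin.castLE (kT_le d) p)) (inl (eT d p)) := Or.inl ⟨p, rfl, rfl⟩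

lemma corr_canonB (q : Fin (kB d)) :
    corr d (inr (Fin.castLE (kB_le d) q)) (inr (eB d q)) := Or.inr ⟨q, rfl, rfl⟩

lemma t_top_edge {p : Fin (kT d)} {y} (h : tD d (inl (Fin.castLE (kT_le d) p)) y) :
    ∃ y', corr d y y' ∧ d (inl (eT d p)) y' := by
  rcases h with ⟨x', y', h1, h2, h3⟩ | hl
  · rw [corr_left_fun h1 (corr_canonT p)] at h3
    exact ⟨y', h2, h3⟩
  · exact absurd hl (fun hl => not_leftover_of_corr (corr_canonT p) hl)

lemma t_bot_edge {q : Fin (kB d)} {y} (h : tD d (inr (Fin.castLE (kB_le d) q)) y) :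
    ∃ y', corr d y y' ∧ d (inr (eB d q)) y' := by
  rcases h with ⟨x', y', h1, h2, h3⟩ | hl
  · rw [corr_left_fun h1 (corr_canonB q)] at h3
    exact ⟨y', h2, h3⟩
  · exact absurd hl (fun hl => not_leftover_of_corr (corr_canonB q) hl)

lemma rD_no_tt {a b : Fin n} : ¬ rD d (inl a) (inl b) := by
  rintro ⟨p, ⟨hx, hy⟩ | ⟨hx, hy⟩⟩
  exacts [(nomatch hy), (nomatch hx)]

lemma rD_no_bb {a b : Fin n} : ¬ rD d (inr a) (inr b) := by
  rintro ⟨p, ⟨hx, hy⟩ | ⟨hx, hy⟩⟩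
  exacts [(nomatch hx), (nomatch hy)]

lemma lD_no_tt {a b : Fin n} : ¬ lD d (inl a) (inl b) := by
  rintro ⟨q, ⟨hx, hy⟩ | ⟨hx, hy⟩⟩
  exacts [(nomatch hy), (nomatch hx)]

lemma lD_no_bb {a b : Fin n} : ¬ lD d (inr a) (inr b) := by
  rintro ⟨q, ⟨hx, hy⟩ | ⟨hx, hy⟩⟩
  exacts [(nomatch hx), (nomatch hy)]

/-- unfolding an `rD` edge starting at a top vertex. -/
lemma rD_tb {u m : Fin n} (h : rD d (inl u) (inr m)) :
    ∃ p : Fin (kT d), u = eT d p ∧ m = Fin.castLE (kT_le d) p := by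
  obtain ⟨p, ⟨hx, hy⟩ | ⟨hx, hy⟩⟩ := h
  · exact ⟨p, inl.injEq .. ▸ hx, inr.injEq .. ▸ hy⟩
  · exact (nomatch hx)

lemma lD_tb {m v : Fin n} (h : lD d (inl m) (inr v)) :
    ∃ q : Fin (kB d), m = Fin.castLE (kB_le d) q ∧ v = eB d q := by
  obtain ⟨q, ⟨hx, hy⟩ | ⟨hx, hy⟩⟩ := h
  · exact ⟨q, inl.injEq .. ▸ hx, inr.injEq .. ▸ hy⟩
  · exact (nomatch hx)

include hd in
lemma dreach_rt (m m' : Fin n) :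
    dreach (rD d) (tD d) m m' ↔ m = m' ∨ tD d (inl m) (inl m') := by
  have hstep : ∀ a b : Fin n, dstep (rD d) (tD d) a b ↔ tD d (inl a) (inl b) := by
    intro a b
    constructor
    · rintro (h | h)
      · exact absurd h rD_no_bb
      · exact h
    · exact Or.inr
  rw [dreach, reach_char]
  · simp only [hstep]
  · intro a b h
    rw [hstep] at *
    exact tD_symm hd _ _ h
  · intro a b c h1 h2
    rw [hstep] at h1 h2
    exact inl_injective (tD_fun hd _ _ _ h1 h2)

include hd in
lemma rt_tt (u u' : Fin n) :
    dcomp (rD d) (tD d) (inl u) (inl u') ↔ d (inl u) (inl u') := by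
  constructor
  · rintro (h | ⟨hne, m, m', h1, h2, h3⟩)
    · exact absurd h rD_no_tt
    · obtain ⟨p, hu, hm⟩ := rD_tb h1
      obtain ⟨p', hu', hm'⟩ := rD_tb h3
      rw [dreach_rt hd] at h2
      rcases h2 with rfl | h2
      · rw [hm'] at hm
        rw [hu, hu', Fin.castLE_injective _ hm] at hne
        exact absurd rfl hne
      · subst hm; subst hm'
        obtain ⟨y', hcorr, hde⟩ := t_top_edge h2
        rw [corr_left_fun hcorr (corr_canonT p')] at hde
        rw [hu, hu']
        exact hde
  · intro h
    have hu : u ∈ tFin d := (mem_tFin d).mpr ⟨_, h⟩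
    have hu' : u' ∈ tFin d := (mem_tFin d).mpr ⟨_, hd.1 _ _ h⟩
    obtain ⟨p, hp⟩ := exists_eT d hu
    obtain ⟨p', hp'⟩ := exists_eT d hu'
    right
    refine ⟨fun e => hd.2.1 _ (e ▸ h), Fin.castLE (kT_le d) p, Fin.castLE (kT_le d) p',
      ⟨p, Or.inl ⟨by rw [hp], rfl⟩⟩, ?_, ⟨p', Or.inl ⟨by rw [hp'], rfl⟩⟩⟩
    refine Relation.ReflTransGen.single (Or.inr ?_)
    exact Or.inl ⟨inl u, inl u', by rw [← hp]; exact corr_canonT p,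
      by rw [← hp']; exact corr_canonT p', h⟩

include hd in
lemma rt_tb (u v : Fin n) :
    dcomp (rD d) (tD d) (inl u) (inr v) ↔
      ∃ q : Fin (kB d), v = Fin.castLE (kB_le d) q ∧ d (inl u) (inr (eB d q)) := by
  constructor
  · rintro ⟨m, m', h1, h2, h3⟩
    obtain ⟨p, hu, hm⟩ := rD_tb h1
    rw [dreach_rt hd] at h2
    rcases h2 with rfl | h2
    · subst hm
      obtain ⟨y', hcorr, hde⟩ := t_top_edge h3
      rcases hcorr with ⟨p₂, hx, hy⟩ | ⟨q₂, hx, hy⟩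
      · exact (nomatch hx)
      · rw [inr.injEq] at hx
        rw [hy] at hde
        exact ⟨q₂, hx, hu ▸ hde⟩
    · have := tD_fun hd _ _ _ (tD_symm hd _ _ h2) h3
      exact (nomatch this)
  · rintro ⟨q, hv, hde⟩
    have hu : u ∈ tFin d := (mem_tFin d).mpr ⟨_, hde⟩
    obtain ⟨p, hp⟩ := exists_eT d hu
    refine ⟨Fin.castLE (kT_le d) p, Fin.castLE (kT_le d) p,
      ⟨p, Or.inl ⟨by rw [hp], rfl⟩⟩, Relation.ReflTransGen.refl, ?_⟩
    exact Or.inl ⟨inl u, inr (eB d q), by rw [← hp]; exact corr_canonT p,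
      by rw [hv]; exact corr_canonB q, hde⟩

include hd in
lemma rt_bb (v v' : Fin n) :
    dcomp (rD d) (tD d) (inr v) (inr v') ↔ tD d (inr v) (inr v') := by
  constructor
  · rintro (h | ⟨hne, m, m', h1, h2, h3⟩)
    · exact h
    · rw [dreach_rt hd] at h2
      rcases h2 with rfl | h2
      · exact absurd (inr_injective (tD_fun hd _ _ _ h1 h3)) hne
      · exact absurd (tD_fun hd _ _ _ h1 h2) (fun e => (nomatch e))
  · exact Or.inl

include hd in
lemma dreach_rtl (m m' : Fin n) :
    dreach (dcomp (rD d) (tD d)) (lD d) m m' ↔ m = m' ∨ tD d (inr m) (inr m') := by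
  have hstep : ∀ a b : Fin n,
      dstep (dcomp (rD d) (tD d)) (lD d) a b ↔ tD d (inr a) (inr b) := by
    intro a b
    constructor
    · rintro (h | h)
      · exact (rt_bb hd a b).mp h
      · exact absurd h lD_no_tt
    · intro h
      exact Or.inl ((rt_bb hd a b).mpr h)
  rw [dreach, reach_char]
  · simp only [hstep]
  · intro a b h
    rw [hstep] at *
    exact tD_symm hd _ _ h
  · intro a b c h1 h2
    rw [hstep] at h1 h2
    exact inr_injective (tD_fun hd _ _ _ h1 h2)

include hd in
lemma no_bb_step {u : Fin n} {q : Fin (kB d)} (hde : d (inl u) (inr (eB d q)))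
    {m' : Fin n} (h : tD d (inr (Fin.castLE (kB_le d) q)) (inr m')) : False := by
  obtain ⟨y', hcorr, hde2⟩ := t_bot_edge h
  have := hd.2.2.1 _ _ _ hde2 (hd.1 _ _ hde)
  rw [this] at hcorr
  rcases hcorr with ⟨p₂, hx, hy⟩ | ⟨q₂, hx, hy⟩
  · exact (nomatch hx)
  · exact (nomatch hy)

end MotzkinAux
namespace MotzkinAux

variable {n : ℕ} {d : MDiag n} (hd : IsMotzkin d)

include hd in
lemma final_tt (u u' : Fin n) :
    dcomp (dcomp (rD d) (tD d)) (lD d) (inl u) (inl u') ↔ d (inl u) (inl u') := by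
  constructor
  · rintro (h | ⟨hne, m, m', h1, h2, h3⟩)
    · exact (rt_tt hd u u').mp h
    · obtain ⟨q, hm, hde⟩ := (rt_tb hd u m).mp h1
      rw [dreach_rtl hd] at h2
      rcases h2 with rfl | h2
      · obtain ⟨q₂, hm₂, hde₂⟩ := (rt_tb hd u' m).mp h3
        rw [hm] at hm₂
        rw [← Fin.castLE_injective _ hm₂] at hde₂
        exact absurd (inl_injective (hd.2.2.1 _ _ _ (hd.1 _ _ hde) (hd.1 _ _ hde₂))) hne
      · rw [hm] at h2
        exact absurd h2 (fun h => no_bb_step hd hde h)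
  · intro h
    exact Or.inl ((rt_tt hd u u').mpr h)

include hd in
lemma final_tb (u v : Fin n) :
    dcomp (dcomp (rD d) (tD d)) (lD d) (inl u) (inr v) ↔ d (inl u) (inr v) := by
  constructor
  · rintro ⟨m, m', h1, h2, h3⟩
    obtain ⟨q, hm, hde⟩ := (rt_tb hd u m).mp h1
    rw [dreach_rtl hd] at h2
    rcases h2 with rfl | h2
    · obtain ⟨q₂, hm₂, hv₂⟩ := lD_tb h3
      rw [hm] at hm₂
      rw [← Fin.castLE_injective _ hm₂] at hv₂
      rw [hv₂]
      exact hde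
    · rw [hm] at h2
      exact absurd h2 (fun h => no_bb_step hd hde h)
  · intro h
    have hv : v ∈ bFin d := (mem_bFin d).mpr ⟨_, hd.1 _ _ h⟩
    obtain ⟨q, hq⟩ := exists_eB d hv
    refine ⟨Fin.castLE (kB_le d) q, Fin.castLE (kB_le d) q, ?_,
      Relation.ReflTransGen.refl, ⟨q, Or.inl ⟨rfl, congrArg inr hq.symm⟩⟩⟩
    exact (rt_tb hd u _).mpr ⟨q, rfl, by rw [hq]; exact h⟩

include hd in
lemma final_bb (v v' : Fin n) :
    dcomp (dcomp (rD d) (tD d)) (lD d) (inr v) (inr v') ↔ d (inr v) (inr v') := by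
  constructor
  · rintro (h | ⟨hne, m, m', h1, h2, h3⟩)
    · exact absurd h lD_no_bb
    · obtain ⟨q, hm, hv⟩ := lD_tb h1
      obtain ⟨q', hm', hv'⟩ := lD_tb h3
      rw [dreach_rtl hd] at h2
      rcases h2 with rfl | h2
      · rw [hm'] at hm
        rw [hv, hv', Fin.castLE_injective _ hm] at hne
        exact absurd rfl hne
      · subst hm; subst hm'
        obtain ⟨y', hcorr, hde⟩ := t_bot_edge h2
        rw [corr_left_fun hcorr (corr_canonB q')] at hde
        rw [hv, hv']
        exact hde
  · intro h
    have hv : v ∈ bFin d := (mem_bFin d).mpr ⟨_, h⟩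
    have hv' : v' ∈ bFin d := (mem_bFin d).mpr ⟨_, hd.1 _ _ h⟩
    obtain ⟨q, hq⟩ := exists_eB d hv
    obtain ⟨q', hq'⟩ := exists_eB d hv'
    right
    refine ⟨fun e => hd.2.1 _ (e ▸ h), Fin.castLE (kB_le d) q, Fin.castLE (kB_le d) q',
      ⟨q, Or.inl ⟨rfl, congrArg inr hq.symm⟩⟩, ?_, ⟨q', Or.inl ⟨rfl, congrArg inr hq'.symm⟩⟩⟩
    refine Relation.ReflTransGen.single (Or.inl ?_)
    refine (rt_bb hd _ _).mpr ?_
    exact Or.inl ⟨inr v, inr v', by rw [← hq]; exact corr_canonB q,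
      by rw [← hq']; exact corr_canonB q', h⟩

include hd in
lemma final_eq : d = dcomp (dcomp (rD d) (tD d)) (lD d) := by
  funext x y
  apply propext
  rcases x with u | v <;> rcases y with u' | v'
  · exact (final_tt hd u u').symm
  · exact (final_tb hd u v').symm
  · have h : dcomp (dcomp (rD d) (tD d)) (lD d) (inr v) (inl u') =
        dcomp (dcomp (rD d) (tD d)) (lD d) (inl u') (inr v) := rfl
    rw [h, final_tb hd]
    exact ⟨hd.1 _ _, hd.1 _ _⟩
  · exact (final_bb hd v v').symm

end MotzkinAux

open MotzkinAux in
/-- Every Motzkin diagram `d` factors as `d = r · t · l` with `r ∈ RP_n`, `t ∈ TL_n`,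
`l ∈ LP_n`, where `r` is the unique right planar rook diagram with top set `τ(d)` and
bottom set `{1, …, |τ(d)|}`, and `l` is the unique left planar rook diagram with bottom
set `β(d)` and top set `{1, …, |β(d)|}`. -/
theorem motzkin_rtl_decomposition (n : ℕ) (d : MDiag n) (hd : IsMotzkin d) :
    ∃ r t l : MDiag n, IsRPdiag r ∧ IsTLdiag t ∧ IsLPdiag l ∧
      d = dcomp (dcomp r t) l ∧
      topSet r = topSet d ∧
      dbotSet r = {b : Fin n | (b : ℕ) < (topSet d).ncard} ∧
      topSet l = {a : Fin n | (a : ℕ) < (dbotSet d).ncard} ∧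
      dbotSet l = dbotSet d := by
  refine ⟨rD d, tD d, lD d, rD_isRP, tD_isTL hd, lD_isLP, final_eq hd, rD_topSet, ?_, ?_,
    lD_botSet⟩
  · rw [ncard_top]; exact rD_botSet
  · rw [ncard_bot]; exact lD_topSet
end
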